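/- arXiv:1102.3760 — 2 statements merged into one kernel-verified Lean document; each statement's English description precedes it below -/
import Mathlib

section
/- Let G be a 2-connected graph with nominated vertices a, b, c, d, and let (G_1, G_2) be a separation of G of order 2 with a, b ∈ V(G_1), c, d ∈ V(G_2), and V(G_1) ∩ V(G_2) = {u, v}. Let G_i' be G_i with the edge uv added. Then G contains a K_4-minor rooted at a, b, c, d if and only if G_1' contains a K_4-minor rooted at a, b, u, v or G_2' contains one rooted at u, v, c, d. -/
open SimpleGraph

variable {V : Type*}

/-- Branch-set definition of an `H`-minor in `G`. -/
def HasGraphMinor {W : Type*} (G : SimpleGraph V) (H : SimpleGraph W) : Prop :=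
  ∃ B : W → Set V,
    (∀ w, (B w).Nonempty) ∧
    (∀ w, (G.induce (B w)).Connected) ∧
    (Pairwise fun w w' => Disjoint (B w) (B w')) ∧
    ∀ ⦃w w'⦄, H.Adj w w' → ∃ x ∈ B w, ∃ y ∈ B w', G.Adj x y

/-- `A,B,C,D` are the branch sets of a `K₄`-minor rooted at `a,b,c,d`. -/
def RootedK4MinorOn (G : SimpleGraph V) (a b c d : V) (A B C D : Set V) : Prop :=
    a ∈ A ∧ b ∈ B ∧ c ∈ C ∧ d ∈ D ∧
    (G.induce A).Connected ∧ (G.induce B).Connected ∧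
    (G.induce C).Connected ∧ (G.induce D).Connected ∧
    Disjoint A B ∧ Disjoint A C ∧ Disjoint A D ∧
    Disjoint B C ∧ Disjoint B D ∧ Disjoint C D ∧
    (∃ x ∈ A, ∃ y ∈ B, G.Adj x y) ∧ (∃ x ∈ A, ∃ y ∈ C, G.Adj x y) ∧
    (∃ x ∈ A, ∃ y ∈ D, G.Adj x y) ∧ (∃ x ∈ B, ∃ y ∈ C, G.Adj x y) ∧
    (∃ x ∈ B, ∃ y ∈ D, G.Adj x y) ∧ (∃ x ∈ C, ∃ y ∈ D, G.Adj x y)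

/-- A `K₄`-minor rooted at `a,b,c,d`. -/
def RootedK4Minor (G : SimpleGraph V) (a b c d : V) : Prop :=
  ∃ A B C D : Set V, RootedK4MinorOn G a b c d A B C D

/-- A `K₃`-minor rooted at `a,b,c`. -/
def RootedK3Minor (G : SimpleGraph V) (a b c : V) : Prop :=
  ∃ A B C : Set V,
    a ∈ A ∧ b ∈ B ∧ c ∈ C ∧
    (G.induce A).Connected ∧ (G.induce B).Connected ∧ (G.induce C).Connected ∧
    Disjoint A B ∧ Disjoint A C ∧ Disjoint B C ∧
    (∃ x ∈ A, ∃ y ∈ B, G.Adj x y) ∧ (∃ x ∈ A, ∃ y ∈ C, G.Adj x y) ∧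
    (∃ x ∈ B, ∃ y ∈ C, G.Adj x y)

/-- Add a new apex vertex adjacent to every vertex of `s`. -/
def Apex (G : SimpleGraph V) (s : Set V) : SimpleGraph (Option V) where
  Adj x y :=
    (∃ u v, x = some u ∧ y = some v ∧ G.Adj u v) ∨
    (∃ u, x = some u ∧ y = none ∧ u ∈ s) ∨
    (∃ v, x = none ∧ y = some v ∧ v ∈ s)
  symm := by
    constructor
    rintro x y (⟨u, v, rfl, rfl, h⟩ | ⟨u, rfl, rfl, h⟩ | ⟨v, rfl, rfl, h⟩)
    · exact Or.inl ⟨v, u, rfl, rfl, h.symm⟩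
    · exact Or.inr (Or.inr ⟨u, rfl, rfl, h⟩)
    · exact Or.inr (Or.inl ⟨v, rfl, rfl, h⟩)
  loopless := by
    constructor
    rintro x (⟨u, v, rfl, h, hadj⟩ | ⟨u, rfl, h, _⟩ | ⟨v, h, rfl, _⟩)
    · rw [Option.some_inj] at h; subst h; exact hadj.ne rfl
    · cases h
    · cases h

/-- Planarity, via Wagner's theorem: no `K₅`-minor and no `K₃,₃`-minor. -/
def IsPlanar (G : SimpleGraph V) : Prop :=
  ¬ HasGraphMinor G (⊤ : SimpleGraph (Fin 5)) ∧
  ¬ HasGraphMinor G (completeBipartiteGraph (Fin 3) (Fin 3))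

/-- `G` is `k`-connected: more than `k` vertices, and deleting fewer than `k`
vertices leaves a connected graph. -/
def KConnected (k : ℕ) (G : SimpleGraph V) : Prop :=
  k < Nat.card V ∧ ∀ S : Set V, S.Finite → S.ncard < k → (G.induce Sᶜ).Connected

/-- An `(s₁t₁,s₂t₂)`-linkage: an `s₁t₁`-path and an `s₂t₂`-path that are disjoint. -/
def Linkage (G : SimpleGraph V) (s₁ t₁ s₂ t₂ : V) : Prop :=
  ∃ (P : G.Walk s₁ t₁) (Q : G.Walk s₂ t₂),
    P.IsPath ∧ Q.IsPath ∧ P.support.Disjoint Q.support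

/-- `G` is obtained from its induced subgraph on `S` by attaching, to each triangle,
a (possibly empty) clique: `t x` records the triangle of the clique containing `x ∉ S`. -/
def CliqueExpansion (G : SimpleGraph V) (S : Set V) (t : V → Finset V) : Prop :=
  ∀ x ∉ S, ↑(t x) ⊆ S ∧ (t x).card = 3 ∧
    (∀ y ∈ t x, ∀ z ∈ t x, y ≠ z → G.Adj y z) ∧
    (∀ y, G.Adj x y ↔ (y ∈ t x ∨ (y ∉ S ∧ y ≠ x ∧ t y = t x)))

/-- `H` is a planar graph with outerface cycle `(p,q,r,s)`, every internal face a
triangle, and every triangle a face.  (Combinatorial surrogate: `p,q,r,s` bound a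
common face — witnessed by planarity of the graph with an apex added adjacent to
them — the edge count of a near-triangulation of a quadrilateral, and no
separating triangle.) -/
def IsQuadTriangulation {U : Type*} (H : SimpleGraph U) (p q r s : U) : Prop :=
  p ≠ q ∧ p ≠ r ∧ p ≠ s ∧ q ≠ r ∧ q ≠ s ∧ r ≠ s ∧
  H.Adj p q ∧ H.Adj q r ∧ H.Adj r s ∧ H.Adj s p ∧
  IsPlanar H ∧ IsPlanar (Apex H {p, q, r, s}) ∧
  H.edgeSet.ncard + 7 = 3 * Nat.card U ∧
  ∀ T : Finset U, T.card = 3 → (∀ x ∈ T, ∀ y ∈ T, x ≠ y → H.Adj x y) →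
    (((↑T)ᶜ : Set U) = ∅ ∨ (H.induce (↑T)ᶜ).Connected)

/-- `W` is an `(a,b,c,d)`-web. -/
def IsWeb (W : SimpleGraph V) (a b c d : V) : Prop :=
  ∃ (S : Set V) (ha : a ∈ S) (hb : b ∈ S) (hc : c ∈ S) (hd : d ∈ S),
    IsQuadTriangulation (W.induce S) ⟨a, ha⟩ ⟨b, hb⟩ ⟨c, hc⟩ ⟨d, hd⟩ ∧
    ∃ t, CliqueExpansion W S t

/-- `W` is an `{a,b,c,d}`-web, i.e. an `(a',b',c',d')`-web for some ordering. -/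
def IsUnorderedWeb (W : SimpleGraph V) (a b c d : V) : Prop :=
  ∃ p q r s : V, ({p, q, r, s} : Set V) = {a, b, c, d} ∧ IsWeb W p q r s

/-- A separation `(A, B)` of `G` (given by the vertex sets of the two sides). -/
def IsSeparation (G : SimpleGraph V) (A B : Set V) : Prop :=
  A ∪ B = Set.univ ∧
  (∀ ⦃x y⦄, G.Adj x y → (x ∈ A ∧ y ∈ A) ∨ (x ∈ B ∧ y ∈ B)) ∧
  (A \ B).Nonempty ∧ (B \ A).Nonempty

namespace Sep9

variable {V : Type*} {G : SimpleGraph V}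

lemma aux_reach {S : Set V} : ∀ {x y : V} (w : G.Walk x y),
    (∀ z ∈ w.support, z ∈ S) → ∀ (hx : x ∈ S) (hy : y ∈ S),
    (G.induce S).Reachable ⟨x, hx⟩ ⟨y, hy⟩ := by
  intro x y w
  induction w with
  | nil => intro _ hx hy; exact Reachable.refl _
  | @cons x' y' z' h p ih =>
    intro hw hx hy
    have hy' : y' ∈ S := hw _ (by simp)
    have hadj : (G.induce S).Adj ⟨x', hx⟩ ⟨y', hy'⟩ := h
    exact hadj.reachable.trans (ih (fun z hz => hw z (by simp [hz])) hy' hy)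

lemma aux_walk_of_reach {S : Set V} {x y : V} (hx : x ∈ S) (hy : y ∈ S)
    (h : (G.induce S).Reachable ⟨x, hx⟩ ⟨y, hy⟩) :
    ∃ w : G.Walk x y, ∀ z ∈ w.support, z ∈ S := by
  obtain ⟨p⟩ := h
  refine ⟨p.map (Embedding.induce S).toHom, ?_⟩
  intro z hz
  have key : ∀ z ∈ (p.map (Embedding.induce S).toHom).support, z ∈ S := by
    intro z hz
    rw [Walk.support_map] at hz
    obtain ⟨zs, _, rfl⟩ := List.mem_map.mp hz
    exact zs.2
  exact key z hz

lemma aux_connected_hub {S : Set V} {u : V} (hu : u ∈ S)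
    (h : ∀ x ∈ S, ∃ w : G.Walk x u, ∀ z ∈ w.support, z ∈ S) :
    (G.induce S).Connected := by
  rw [connected_iff]
  refine ⟨fun a b => ?_, ⟨⟨u, hu⟩⟩⟩
  obtain ⟨wa, hwa⟩ := h a a.2
  obtain ⟨wb, hwb⟩ := h b b.2
  have ra := aux_reach wa hwa a.2 hu
  have rb := aux_reach wb hwb b.2 hu
  have : (⟨a.1, a.2⟩ : S) = a := rfl
  exact (this ▸ ra).trans (by exact rb.symm)

lemma aux_support_connected [DecidableEq V] {x y : V} (p : G.Walk x y) :
    (G.induce {z | z ∈ p.support}).Connected := by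
  refine aux_connected_hub (by simp : x ∈ {z | z ∈ p.support}) ?_
  intro z hz
  exact ⟨(p.takeUntil z hz).reverse, by
    intro w hw
    rw [Walk.support_reverse, List.mem_reverse] at hw
    exact p.support_takeUntil_subset hz hw⟩

lemma aux_union {S T : Set V} {x : V} (hxS : x ∈ S) (hxT : x ∈ T)
    (hS : (G.induce S).Connected) (hT : (G.induce T).Connected) :
    (G.induce (S ∪ T)).Connected := by
  refine aux_connected_hub (Or.inl hxS : x ∈ S ∪ T) ?_
  rintro z (hz | hz)
  · obtain ⟨w, hw⟩ := aux_walk_of_reach hz hxS (hS.preconnected _ _)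
    exact ⟨w, fun a ha => Or.inl (hw a ha)⟩
  · obtain ⟨w, hw⟩ := aux_walk_of_reach hz hxT (hT.preconnected _ _)
    exact ⟨w, fun a ha => Or.inr (hw a ha)⟩

lemma aux_isPath_append {x m y : V} {p : G.Walk x m} {q : G.Walk m y}
    (hp : p.IsPath) (hq : q.IsPath)
    (h : ∀ z, z ∈ p.support → z ∈ q.support → z = m) : (p.append q).IsPath := by
  rw [Walk.isPath_def, Walk.support_append, List.nodup_append]
  refine ⟨hp.support_nodup, ?_, ?_⟩
  · have := hq.support_nodup
    rw [q.support_eq_cons] at this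
    exact this.of_cons
  · intro a ha b ha' hab
    subst hab
    have haq : a ∈ q.support := List.mem_of_mem_tail ha'
    have : a = m := h a ha haq
    subst this
    have := hq.support_nodup
    rw [q.support_eq_cons] at this
    exact List.Nodup.notMem this ha'

section Sep

variable {S T : Set V} {r₁ r₂ : V}

lemma crossT (hsep : ∀ ⦃x y⦄, G.Adj x y → x ∈ S ∧ y ∈ S ∨ x ∈ T ∧ y ∈ T) :
    ∀ {x y : V} (p : G.Walk x y), x ∉ T → y ∈ T → ∃ z ∈ p.support, z ∈ S ∩ T := by
  intro x y p
  induction p with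
  | nil => intro hx hy; exact absurd hy hx
  | @cons x' y' z' h p ih =>
    intro hx hy
    by_cases hyT : y' ∈ T
    · rcases hsep h with ⟨hxS, hyS⟩ | ⟨hxT, _⟩
      · exact ⟨y', by simp, hyS, hyT⟩
      · exact absurd hxT hx
    · obtain ⟨z, hz, hz'⟩ := ih hyT hy
      exact ⟨z, by simp [hz], hz'⟩

lemma toCut (hsep : ∀ ⦃x y⦄, G.Adj x y → x ∈ S ∧ y ∈ S ∨ x ∈ T ∧ y ∈ T)
    (hcut : S ∩ T = {r₁, r₂}) :
    ∀ {x t : V} (p : G.Walk x t), x ∈ S → t ∈ S →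
      ∃ t', (t' = t ∨ t' = r₁ ∨ t' = r₂) ∧
        ∃ q : G.Walk x t', ∀ z ∈ q.support, z ∈ S ∧ z ∈ p.support := by
  intro x t p
  induction p with
  | nil =>
    intro hx _
    refine ⟨_, Or.inl rfl, Walk.nil, ?_⟩
    intro z hz; simp at hz; subst hz; exact ⟨hx, by simp⟩
  | @cons x' y' z' h p ih =>
    intro hx ht
    by_cases hyS : y' ∈ S
    · obtain ⟨t', ht', q, hq⟩ := ih hyS ht
      exact ⟨t', ht', Walk.cons h q, by
        intro z hz
        rcases List.mem_cons.mp (by simpa using hz) with rfl | hz'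
        · exact ⟨hx, by simp⟩
        · exact ⟨(hq z hz').1, by simp [(hq z hz').2]⟩⟩
    · have hxT : x' ∈ T := by
        rcases hsep h with ⟨_, hyS'⟩ | ⟨hxT, _⟩
        · exact absurd hyS' hyS
        · exact hxT
      have : x' ∈ ({r₁, r₂} : Set V) := hcut ▸ ⟨hx, hxT⟩
      rcases this with rfl | rfl
      · refine ⟨x', Or.inr (Or.inl rfl), Walk.nil, ?_⟩
        intro z hz; simp at hz; subst hz; exact ⟨hx, by simp⟩
      · refine ⟨x', Or.inr (Or.inr rfl), Walk.nil, ?_⟩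
        intro z hz; simp at hz; subst hz; exact ⟨hx, by simp⟩

end Sep


variable {W : Type*} {H : SimpleGraph W}

lemma firsthit [DecidableEq W] {T : Set W} :
    ∀ {r s : W} (w : H.Walk r s), s ∈ T →
      ∃ z ∈ T, ∃ w1 : H.Walk r z, (∀ a ∈ w1.support, a ∈ w.support) ∧
        (∀ a ∈ w1.support, a ∈ T → a = z) ∧ (w.IsPath → w1.IsPath) := by
  intro r s w
  induction w with
  | nil =>
    intro hs
    exact ⟨_, hs, Walk.nil, by simp, by simp +contextual, fun _ => by simp⟩
  | @cons r' m s' h p ih =>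
    intro hs
    by_cases hr : r' ∈ T
    · refine ⟨r', hr, Walk.nil, by simp, by simp +contextual, fun _ => by simp⟩
    · obtain ⟨z, hz, w1, hsub, hfirst, hpath⟩ := ih hs
      refine ⟨z, hz, Walk.cons h w1, ?_, ?_, ?_⟩
      · intro a ha
        rcases List.mem_cons.mp (by simpa using ha) with rfl | ha'
        · simp
        · simp [hsub a ha']
      · intro a ha haT
        rcases List.mem_cons.mp (by simpa using ha) with rfl | ha'
        · exact absurd haT hr
        · exact hfirst a ha' haT
      · intro hip
        rw [Walk.cons_isPath_iff] at hip ⊢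
        exact ⟨hpath hip.1, fun hmem => hip.2 (hsub _ hmem)⟩

lemma take_drop_disjoint [DecidableEq W] {a b z0 : W} {p : H.Walk a b} (hp : p.IsPath)
    (hz : z0 ∈ p.support) :
    ∀ w, w ∈ (p.takeUntil z0 hz).support → w ∈ (p.dropUntil z0 hz).support → w = z0 := by
  intro w hw1 hw2
  have hnd := hp.support_nodup
  rw [← p.take_spec hz, Walk.support_append, List.nodup_append] at hnd
  rcases List.mem_cons.mp (((p.dropUntil z0 hz).support_eq_cons ▸ hw2 : _)) with h | h
  · exact h
  · exact absurd rfl (hnd.2.2 w hw1 w h)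

lemma cyc [DecidableEq W] (hconn : H.Connected)
    (h2 : ∀ w : W, (H.induce {w}ᶜ).Connected) {x y : W} (hne : x ≠ y) :
    ∃ p q : H.Walk x y, p.IsPath ∧ q.IsPath ∧
      ∀ z, z ∈ p.support → z ∈ q.support → z = x ∨ z = y := by
  suffices hmain : ∀ n : ℕ, ∀ x y : W, H.dist x y ≤ n → x ≠ y →
      ∃ p q : H.Walk x y, p.IsPath ∧ q.IsPath ∧
        ∀ z, z ∈ p.support → z ∈ q.support → z = x ∨ z = y by
    exact hmain (H.dist x y) x y le_rfl hne
  intro n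
  induction n with
  | zero =>
    intro x y hd hne
    exact absurd (hconn.dist_eq_zero_iff.mp (Nat.le_zero.mp hd)) hne
  | succ n ih =>
    intro x y hd hne
    obtain ⟨p0, hp0⟩ := hconn.exists_walk_length_eq_dist x y
    obtain ⟨y', h, rest, heq⟩ := Walk.exists_eq_cons_of_ne hne.symm p0.reverse
    have hadj : H.Adj y' y := h.symm
    have hyy' : y ≠ y' := h.ne
    by_cases hy'x : y' = x
    · -- adjacent case: x ~ y
      subst hy'x
      refine ⟨Walk.cons hadj Walk.nil, Walk.cons hadj Walk.nil, ?_, ?_, ?_⟩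
      · simp [hadj.ne]
      · simp [hadj.ne]
      · intro z hz _
        simp only [Walk.support_cons, Walk.support_nil] at hz
        rcases List.mem_cons.mp hz with rfl | hz'
        · exact Or.inl rfl
        · simp at hz'; exact Or.inr hz'
    · -- main case
      have hdist' : H.dist x y' ≤ n := by
        have h1 : p0.reverse.length = rest.length + 1 := by rw [heq]; simp
        have h2' : p0.reverse.length = p0.length := p0.length_reverse
        have h3 : H.dist x y' ≤ rest.reverse.length := dist_le _
        have h4 : rest.reverse.length = rest.length := rest.length_reverse
        omega
      obtain ⟨P1, P2, hP1, hP2, hinter⟩ := ih x y' hdist' (Ne.symm hy'x)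
      -- the two constructions, as a reusable `key`
      have key1 : ∀ P1 P2 : H.Walk x y', P1.IsPath → P2.IsPath →
          (∀ z, z ∈ P1.support → z ∈ P2.support → z = x ∨ z = y') →
          y ∈ P1.support →
          ∃ p q : H.Walk x y, p.IsPath ∧ q.IsPath ∧
            ∀ z, z ∈ p.support → z ∈ q.support → z = x ∨ z = y := by
        intro P1 P2 hP1 hP2 hinter hyP1
        refine ⟨P1.takeUntil y hyP1, P2.append (P1.dropUntil y hyP1).reverse,
          hP1.takeUntil hyP1, ?_, ?_⟩
        · refine aux_isPath_append hP2 ((hP1.dropUntil hyP1).reverse) ?_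
          intro z hz1 hz2
          rw [Walk.support_reverse, List.mem_reverse] at hz2
          rcases hinter z (P1.support_dropUntil_subset hyP1 hz2) hz1 with rfl | rfl
          · -- z = x on dropUntil: x also on takeUntil (start); contradiction with x ≠ y
            have hx1 : z ∈ (P1.takeUntil y hyP1).support := Walk.start_mem_support _
            exact absurd (take_drop_disjoint hP1 hyP1 z hx1 hz2) hne
          · rfl
        · intro z hz1 hz2
          have hz1' : z ∈ P1.support := P1.support_takeUntil_subset hyP1 hz1
          rw [Walk.mem_support_append_iff] at hz2
          rcases hz2 with hz2 | hz2
          · rcases hinter z hz1' hz2 with rfl | rfl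
            · exact Or.inl rfl
            · -- z = y' on takeUntil y: y' also on dropUntil (end); so y' = y, contra
              exfalso
              have : z ∈ (P1.dropUntil y hyP1).support := Walk.end_mem_support _
              exact hyy' (take_drop_disjoint hP1 hyP1 z hz1 this).symm
          · rw [Walk.support_reverse, List.mem_reverse] at hz2
            exact Or.inr (take_drop_disjoint hP1 hyP1 z hz1 hz2)
      by_cases hyP : y ∈ P1.support ∨ y ∈ P2.support
      · rcases hyP with hyP | hyP
        · exact key1 P1 P2 hP1 hP2 hinter hyP
        · exact key1 P2 P1 hP2 hP1 (fun z h1 h2 => hinter z h2 h1) hyP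
      · push_neg at hyP
        obtain ⟨hyP1, hyP2⟩ := hyP
        -- walk from y to x avoiding y'
        have hy_ne : y ∈ ({y'}ᶜ : Set W) := by simpa using hyy'
        have hx_ne : x ∈ ({y'}ᶜ : Set W) := by simpa using fun h' => hy'x h'.symm
        obtain ⟨w0, hw0⟩ := aux_walk_of_reach hy_ne hx_ne ((h2 y').preconnected _ _)
        set R1 : H.Walk y x := (w0.toPath : H.Walk y x) with hR1def
        have hR1path : R1.IsPath := w0.toPath.2
        have hR1sub : ∀ a ∈ R1.support, a ≠ y' := by
          intro a ha
          have := hw0 a (w0.support_toPath_subset ha)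
          simpa using this
        have hxT : x ∈ {a | a ∈ P1.support ∨ a ∈ P2.support} :=
          Or.inl (Walk.start_mem_support _)
        obtain ⟨z, hzT, w1, hw1sub, hw1first, hw1path⟩ := firsthit R1 hxT
        have hw1p : w1.IsPath := hw1path hR1path
        have hzney' : z ≠ y' := hR1sub z (hw1sub z (Walk.end_mem_support _))
        have key2 : ∀ P1 P2 : H.Walk x y', P1.IsPath → P2.IsPath →
            (∀ a, a ∈ P1.support → a ∈ P2.support → a = x ∨ a = y') →
            y ∉ P1.support → y ∉ P2.support →
            (∀ a ∈ w1.support, (a ∈ P1.support ∨ a ∈ P2.support) → a = z) →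
            z ∈ P1.support →
            ∃ p q : H.Walk x y, p.IsPath ∧ q.IsPath ∧
              ∀ a, a ∈ p.support → a ∈ q.support → a = x ∨ a = y := by
          intro P1 P2 hP1 hP2 hinter hyP1 hyP2 hw1first hz1
          have hy'take : y' ∉ (P1.takeUntil z hz1).support := by
            intro hmem
            exact hzney' (take_drop_disjoint hP1 hz1 y' hmem (Walk.end_mem_support _)).symm
          refine ⟨(P1.takeUntil z hz1).append w1.reverse,
            P2.append (Walk.cons hadj Walk.nil), ?_, ?_, ?_⟩
          · refine aux_isPath_append (hP1.takeUntil hz1) hw1p.reverse ?_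
            intro a ha1 ha2
            rw [Walk.support_reverse, List.mem_reverse] at ha2
            exact hw1first a ha2 (Or.inl (P1.support_takeUntil_subset hz1 ha1))
          · refine aux_isPath_append hP2 (by simp [hadj.ne] : (Walk.cons hadj Walk.nil).IsPath) ?_
            intro a ha1 ha2
            simp only [Walk.support_cons, Walk.support_nil] at ha2
            rcases List.mem_cons.mp ha2 with rfl | ha2
            · rfl
            · simp at ha2; subst ha2; exact absurd ha1 hyP2
          · intro a ha1 ha2
            rw [Walk.mem_support_append_iff] at ha1 ha2
            have ha2' : a ∈ P2.support ∨ a = y' ∨ a = y := by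
              rcases ha2 with ha2 | ha2
              · exact Or.inl ha2
              · simp only [Walk.support_cons, Walk.support_nil] at ha2
                rcases List.mem_cons.mp ha2 with rfl | ha2
                · exact Or.inr (Or.inl rfl)
                · simp at ha2; exact Or.inr (Or.inr ha2)
            rcases ha1 with ha1 | ha1
            · -- a on P1.takeUntil z
              have haP1 : a ∈ P1.support := P1.support_takeUntil_subset hz1 ha1
              rcases ha2' with ha2' | ha2' | ha2'
              · rcases hinter a haP1 ha2' with rfl | rfl
                · exact Or.inl rfl
                · exact absurd ha1 hy'take
              · exact absurd (ha2' ▸ ha1) hy'take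
              · exact absurd (ha2' ▸ haP1) hyP1
            · -- a on w1.reverse
              rw [Walk.support_reverse, List.mem_reverse] at ha1
              rcases ha2' with ha2' | ha2' | ha2'
              · have : a = z := hw1first a ha1 (Or.inr ha2')
                subst this
                rcases hinter a hz1 ha2' with rfl | rfl
                · exact Or.inl rfl
                · exact absurd rfl hzney'
              · exact absurd ha2' (hR1sub a (hw1sub a ha1))
              · exact Or.inr ha2'
        rcases hzT with hz1 | hz2
        · exact key2 P1 P2 hP1 hP2 hinter hyP1 hyP2 hw1first hz1
        · exact key2 P2 P1 hP2 hP1 (fun a h1 h2 => hinter a h2 h1) hyP2 hyP1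
            (fun a ha hor => hw1first a ha (Or.symm hor)) hz2


section ApexHelpers

variable {W' : Type*} {H' : SimpleGraph W'} {s : Set W'}

lemma apex_lift {x y : W'} (h : H'.Adj x y) : (Apex H' s).Adj (some x) (some y) :=
  Or.inl ⟨x, y, rfl, rfl, h⟩

lemma apex_to_none {x : W'} (hx : x ∈ s) : (Apex H' s).Adj (some x) none :=
  Or.inr (Or.inl ⟨x, rfl, rfl, hx⟩)

lemma apex_from_none {x : W'} (hx : x ∈ s) : (Apex H' s).Adj none (some x) :=
  Or.inr (Or.inr ⟨x, rfl, rfl, hx⟩)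

lemma apex_proj {x y : W'} (h : (Apex H' s).Adj (some x) (some y)) : H'.Adj x y := by
  rcases h with ⟨u, v, hu, hv, hadj⟩ | ⟨u, hu, hv, _⟩ | ⟨v, hu, hv, _⟩
  · rw [Option.some_inj] at hu hv; subst hu; subst hv; exact hadj
  · exact absurd hv (by simp)
  · exact absurd hu (by simp)

lemma apex_adj_none {y : Option W'} (h : (Apex H' s).Adj none y) :
    ∃ v, y = some v ∧ v ∈ s := by
  rcases h with ⟨u, v, hu, hv, hadj⟩ | ⟨u, hu, hv, _⟩ | ⟨v, hu, hv, hv'⟩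
  · exact absurd hu (by simp)
  · exact absurd hu (by simp)
  · exact ⟨v, hv, hv'⟩

end ApexHelpers

section Lift2

variable {T : Set V} {K1 : Set ↥T} {K2 : Set (Option ↥T)}

/-- Lift a `G`-walk inside `T` to the doubly-apexed graph. -/
lemma lift2 : ∀ {x y : V} (w : G.Walk x y) (hT : ∀ z ∈ w.support, z ∈ T)
    (hx : x ∈ T) (hy : y ∈ T),
    ∃ W2 : (Apex (Apex (G.induce T) K1) K2).Walk (some (some ⟨x, hx⟩)) (some (some ⟨y, hy⟩)),
      ∀ α ∈ W2.support, ∃ (b : V) (hb : b ∈ T), α = some (some ⟨b, hb⟩) ∧ b ∈ w.support := by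
  intro x y w
  induction w with
  | nil =>
    intro _ hx hy
    exact ⟨Walk.nil, by simp +contextual [hx]⟩
  | @cons x' m y' h p ih =>
    intro hT hx hy
    have hm : m ∈ T := hT m (by simp)
    have hadj : (Apex (Apex (G.induce T) K1) K2).Adj (some (some ⟨x', hx⟩)) (some (some ⟨m, hm⟩)) :=
      apex_lift (apex_lift h)
    obtain ⟨W2, hW2⟩ := ih (fun z hz => hT z (by simp [hz])) hm hy
    refine ⟨Walk.cons hadj W2, ?_⟩
    intro α hα
    rcases List.mem_cons.mp (by simpa using hα) with rfl | hα'
    · exact ⟨x', hx, rfl, by simp⟩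
    · obtain ⟨b, hb, hbeq, hbw⟩ := hW2 α hα'
      exact ⟨b, hb, hbeq, by simp [hbw]⟩

/-- Project a walk of the doubly-apexed graph that stays among `some (some _)`
vertices down to a `G`-walk inside `T`. -/
lemma proj2 : ∀ {α β : Option (Option ↥T)}
    (m : (Apex (Apex (G.induce T) K1) K2).Walk α β)
    (hm : ∀ γ ∈ m.support, ∃ b : ↥T, γ = some (some b))
    {bα bβ : ↥T} (hα : α = some (some bα)) (hβ : β = some (some bβ)),
    ∃ w : G.Walk ↑bα ↑bβ, ∀ z ∈ w.support, ∃ b : ↥T, ↑b = z ∧ some (some b) ∈ m.support := by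
  intro α β m
  induction m with
  | nil =>
    intro _ bα bβ hα hβ
    rw [hα] at hβ
    have hbb : bα = bβ := by simpa using hβ
    subst hbb
    refine ⟨Walk.nil, ?_⟩
    intro z hz
    have hz' : z = ↑bα := by simpa using hz
    subst hz'
    exact ⟨bα, rfl, by simp [hα]⟩
  | @cons α' γ' β' h p ih =>
    intro hm bα bβ hα hβ
    obtain ⟨bγ, hγ⟩ := hm γ' (by simp)
    subst hα hγ
    have h1 : (Apex (G.induce T) K1).Adj (some bα) (some bγ) := apex_proj h
    have h0 : (G.induce T).Adj bα bγ := apex_proj h1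
    have hadj : G.Adj ↑bα ↑bγ := h0
    obtain ⟨w, hw⟩ := ih (fun γ hγ => hm γ (by simp [hγ])) rfl hβ
    refine ⟨Walk.cons hadj w, ?_⟩
    intro z hz
    rcases List.mem_cons.mp (by simpa using hz) with rfl | hz'
    · exact ⟨bα, rfl, by simp⟩
    · obtain ⟨b, hb, hbm⟩ := hw z hz'
      exact ⟨b, hb, by simp [hbm]⟩

end Lift2

section MengerMain

variable [DecidableEq V] {S T : Set V} {r₁ r₂ z₁ z₂ : V}

lemma menger (hsep : ∀ ⦃x y⦄, G.Adj x y → x ∈ S ∧ y ∈ S ∨ x ∈ T ∧ y ∈ T)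
    (hcut : S ∩ T = {r₁, r₂})
    (h2' : ∀ w : V, (G.induce {w}ᶜ).Connected)
    (hr12 : r₁ ≠ r₂) (hr₁S : r₁ ∈ S) (hr₂S : r₂ ∈ S) (hr₁T : r₁ ∈ T) (hr₂T : r₂ ∈ T)
    (hz₁T : z₁ ∈ T) (hz₁S : z₁ ∉ S) (hz₂T : z₂ ∈ T) (hz₂S : z₂ ∉ S) (hz12 : z₁ ≠ z₂) :
    ∃ P Q : Set V, P ⊆ T ∧ Q ⊆ T ∧ Disjoint P Q ∧
      (G.induce P).Connected ∧ (G.induce Q).Connected ∧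
      r₁ ∈ P ∧ r₂ ∈ Q ∧ ((z₁ ∈ P ∧ z₂ ∈ Q) ∨ (z₂ ∈ P ∧ z₁ ∈ Q)) ∧
      ∃ x ∈ P, ∃ y ∈ Q, G.Adj x y := by
  have hsep' : ∀ ⦃x y⦄, G.Adj x y → x ∈ T ∧ y ∈ T ∨ x ∈ S ∧ y ∈ S := fun x y h => (hsep h).symm
  have hcut' : T ∩ S = {r₁, r₂} := by rw [Set.inter_comm]; exact hcut
  -- avoiding walks within T
  have AV : ∀ b0 x t : V, x ∈ T → t ∈ T → x ≠ b0 → t ≠ b0 →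
      ∃ t', (t' = t ∨ t' = r₁ ∨ t' = r₂) ∧
        ∃ q : G.Walk x t', ∀ z ∈ q.support, z ∈ T ∧ z ≠ b0 := by
    intro b0 x t hxT htT hxb htb
    have hx' : x ∈ ({b0}ᶜ : Set V) := by simpa using hxb
    have ht' : t ∈ ({b0}ᶜ : Set V) := by simpa using htb
    obtain ⟨w, hw⟩ := aux_walk_of_reach hx' ht' ((h2' b0).preconnected _ _)
    obtain ⟨t', ht', q, hq⟩ := toCut hsep' hcut' w hxT htT
    exact ⟨t', ht', q, fun z hz =>
      ⟨(hq z hz).1, by have := hw z (hq z hz).2; simpa using this⟩⟩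
  have M3 : ∀ b0 : V, ∀ x, x ∈ T → x ≠ b0 → ∃ t', (t' = r₁ ∨ t' = r₂) ∧
      ∃ q : G.Walk x t', ∀ z ∈ q.support, z ∈ T ∧ z ≠ b0 := by
    intro b0 x hxT hxb
    by_cases hb1 : b0 = r₁
    · subst hb1
      obtain ⟨t', ht', q, hq⟩ := AV b0 x r₂ hxT hr₂T hxb (Ne.symm hr12)
      refine ⟨t', ?_, q, hq⟩
      rcases ht' with rfl | rfl | rfl
      · exact Or.inr rfl
      · exact Or.inl rfl
      · exact Or.inr rfl
    · obtain ⟨t', ht', q, hq⟩ := AV b0 x r₁ hxT hr₁T hxb (Ne.symm hb1)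
      refine ⟨t', ?_, q, hq⟩
      rcases ht' with rfl | rfl | rfl
      · exact Or.inl rfl
      · exact Or.inl rfl
      · exact Or.inr rfl
  have hz₁r₁ : z₁ ≠ r₁ := fun h => hz₁S (h ▸ hr₁S)
  have hz₁r₂ : z₁ ≠ r₂ := fun h => hz₁S (h ▸ hr₂S)
  -- z₁ → r₂ within T
  have MB : ∃ q : G.Walk z₁ r₂, ∀ z ∈ q.support, z ∈ T := by
    obtain ⟨t', ht', q, hq⟩ := AV r₁ z₁ r₂ hz₁T hr₂T hz₁r₁ (Ne.symm hr12)
    have ht'' : t' ≠ r₁ := (hq t' (Walk.end_mem_support q)).2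
    have : t' = r₂ := by tauto
    subst this
    exact ⟨q, fun z hz => (hq z hz).1⟩
  -- z₁ → r₁ within T
  have MB1 : ∃ q : G.Walk z₁ r₁, ∀ z ∈ q.support, z ∈ T := by
    obtain ⟨t', ht', q, hq⟩ := AV r₂ z₁ r₁ hz₁T hr₁T hz₁r₂ hr12
    have ht'' : t' ≠ r₂ := (hq t' (Walk.end_mem_support q)).2
    have : t' = r₁ := by tauto
    subst this
    exact ⟨q, fun z hz => (hq z hz).1⟩
  -- everybody in T reaches r₁ within T
  have MC : ∀ x ∈ T, ∃ q : G.Walk x r₁, ∀ z ∈ q.support, z ∈ T := by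
    intro x hxT
    by_cases hxr2 : x = r₂
    · subst hxr2
      obtain ⟨q0, hq0⟩ := MB
      obtain ⟨q1, hq1⟩ := MB1
      refine ⟨q0.reverse.append q1, ?_⟩
      intro z hz
      rw [Walk.mem_support_append_iff] at hz
      rcases hz with hz | hz
      · rw [Walk.support_reverse, List.mem_reverse] at hz; exact hq0 z hz
      · exact hq1 z hz
    · obtain ⟨t', ht', q, hq⟩ := AV r₂ x r₁ hxT hr₁T hxr2 hr12
      have ht'' : t' ≠ r₂ := (hq t' (Walk.end_mem_support q)).2
      have : t' = r₁ := by tauto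
      subst this
      exact ⟨q, fun z hz => (hq z hz).1⟩
  -- everybody in T reaches z₁ within T
  have MCz : ∀ x ∈ T, ∃ q : G.Walk x z₁, ∀ z ∈ q.support, z ∈ T := by
    intro x hxT
    obtain ⟨q0, hq0⟩ := MC x hxT
    obtain ⟨q1, hq1⟩ := MB1
    refine ⟨q0.append q1.reverse, ?_⟩
    intro z hz
    rw [Walk.mem_support_append_iff] at hz
    rcases hz with hz | hz
    · exact hq0 z hz
    · rw [Walk.support_reverse, List.mem_reverse] at hz; exact hq1 z hz
  -- the doubly-apexed auxiliary graph
  set K1 : Set ↥T := {⟨r₁, hr₁T⟩, ⟨r₂, hr₂T⟩} with hK1def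
  set K2 : Set (Option ↥T) := {some ⟨z₁, hz₁T⟩, some ⟨z₂, hz₂T⟩} with hK2def
  set H2 : SimpleGraph (Option (Option ↥T)) := Apex (Apex (G.induce T) K1) K2 with hH2def
  have hz₁K2 : (some ⟨z₁, hz₁T⟩ : Option ↥T) ∈ K2 := Set.mem_insert _ _
  have hz₂K2 : (some ⟨z₂, hz₂T⟩ : Option ↥T) ∈ K2 := Set.mem_insert_of_mem _ rfl
  -- builder: walk to the top apex
  have build : ∀ (x : V) (hx : x ∈ T) (t' : V), (t' = r₁ ∨ t' = r₂) → ∀ (q : G.Walk x t'),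
      (∀ z ∈ q.support, z ∈ T) →
      ∃ Wb : H2.Walk (some (some ⟨x, hx⟩)) (some none),
        ∀ α ∈ Wb.support, α = some none ∨
          ∃ (b : V) (hb : b ∈ T), α = some (some ⟨b, hb⟩) ∧ b ∈ q.support := by
    intro x hx t' ht' q hq
    have ht'T : t' ∈ T := hq t' (Walk.end_mem_support q)
    obtain ⟨W2, hW2⟩ := lift2 (K1 := K1) (K2 := K2) q hq hx ht'T
    have hK1m : (⟨t', ht'T⟩ : ↥T) ∈ K1 := by
      rcases ht' with rfl | rfl
      · exact Set.mem_insert _ _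
      · exact Set.mem_insert_of_mem _ rfl
    have hedge : H2.Adj (some (some ⟨t', ht'T⟩)) (some none) := apex_lift (apex_to_none hK1m)
    refine ⟨W2.append (Walk.cons hedge Walk.nil), ?_⟩
    intro α hα
    rw [Walk.mem_support_append_iff] at hα
    rcases hα with hα | hα
    · obtain ⟨b, hb, he, hm⟩ := hW2 α hα
      exact Or.inr ⟨b, hb, he, hm⟩
    · simp only [Walk.support_cons, Walk.support_nil] at hα
      rcases List.mem_cons.mp hα with rfl | hα
      · exact Or.inr ⟨t', ht'T, rfl, Walk.end_mem_support q⟩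
      · simp at hα; subst hα; exact Or.inl rfl
  -- H2 is connected
  have hH2conn : H2.Connected := by
    rw [connected_iff]
    refine ⟨?_, ⟨none⟩⟩
    have hhub : ∀ γ : Option (Option ↥T), H2.Reachable γ (some none) := by
      intro γ
      cases γ with
      | none =>
        have h0 : H2.Adj none (some (some ⟨z₁, hz₁T⟩)) := apex_from_none hz₁K2
        obtain ⟨q, hq⟩ := MC z₁ hz₁T
        obtain ⟨Wb, _⟩ := build z₁ hz₁T r₁ (Or.inl rfl) q hq
        exact ⟨Walk.cons h0 Wb⟩
      | some o =>
        cases o with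
        | none => exact Reachable.refl _
        | some b =>
          obtain ⟨q, hq⟩ := MC ↑b b.2
          obtain ⟨Wb, _⟩ := build ↑b b.2 r₁ (Or.inl rfl) q hq
          exact ⟨Wb⟩
    intro α β
    exact (hhub α).trans (hhub β).symm
  -- H2 is 2-connected
  have hH2_2 : ∀ w, (H2.induce {w}ᶜ).Connected := by
    intro w
    cases w with
    | none =>
      apply aux_connected_hub (u := (some none : Option (Option ↥T))) (by simp)
      intro γ hγ
      cases γ with
      | none => simp at hγ
      | some o =>
        cases o with
        | none => exact ⟨Walk.nil, by simp⟩
        | some b =>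
          obtain ⟨q, hq⟩ := MC ↑b b.2
          obtain ⟨Wb, hWb⟩ := build ↑b b.2 r₁ (Or.inl rfl) q hq
          refine ⟨Wb, ?_⟩
          intro α hα
          rcases hWb α hα with rfl | ⟨b', hb', rfl, _⟩ <;> simp
    | some o =>
      cases o with
      | none =>
        apply aux_connected_hub (u := (none : Option (Option ↥T))) (by simp)
        intro γ hγ
        cases γ with
        | none => exact ⟨Walk.nil, by simp⟩
        | some o' =>
          cases o' with
          | none => simp at hγ
          | some b =>
            obtain ⟨q, hq⟩ := MCz ↑b b.2
            obtain ⟨W2, hW2⟩ := lift2 (K1 := K1) (K2 := K2) q hq b.2 hz₁T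
            have hedge : H2.Adj (some (some ⟨z₁, hz₁T⟩)) none := apex_to_none hz₁K2
            refine ⟨W2.append (Walk.cons hedge Walk.nil), ?_⟩
            intro α hα
            rw [Walk.mem_support_append_iff] at hα
            rcases hα with hα | hα
            · obtain ⟨b', hb', rfl, _⟩ := hW2 α hα; simp
            · simp only [Walk.support_cons, Walk.support_nil] at hα
              rcases List.mem_cons.mp hα with rfl | hα
              · simp
              · simp at hα; subst hα; simp
      | some b0 =>
        apply aux_connected_hub (u := (some none : Option (Option ↥T))) (by simp)
        have main : ∀ b : ↥T, b ≠ b0 →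
            ∃ w : H2.Walk (some (some b)) (some none),
              ∀ z ∈ w.support, z ∈ ({some (some b0)}ᶜ : Set (Option (Option ↥T))) := by
          intro b hbb0
          have hvne : (↑b : V) ≠ ↑b0 := fun h => hbb0 (Subtype.ext h)
          obtain ⟨t', ht', q, hq⟩ := M3 ↑b0 ↑b b.2 hvne
          obtain ⟨Wb, hWb⟩ := build ↑b b.2 t' ht' q (fun z hz => (hq z hz).1)
          refine ⟨Wb, ?_⟩
          intro α hα
          rcases hWb α hα with rfl | ⟨b', hb', rfl, hbq⟩
          · simp
          · have : b' ≠ ↑b0 := (hq b' hbq).2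
            simp only [Set.mem_compl_iff, Set.mem_singleton_iff]
            intro hcon
            apply this
            have : (⟨b', hb'⟩ : ↥T) = b0 := by
              have := hcon
              simpa using this
            exact congrArg Subtype.val this
        intro γ hγ
        cases γ with
        | none =>
          -- go to a z-apex neighbour different from b0, then onwards
          by_cases hb0z : (↑b0 : V) = z₁
          · have h0 : H2.Adj none (some (some ⟨z₂, hz₂T⟩)) := apex_from_none hz₂K2
            have hne : (⟨z₂, hz₂T⟩ : ↥T) ≠ b0 := by
              intro h; apply hz12; rw [← hb0z, ← congrArg Subtype.val h]
            obtain ⟨w, hw⟩ := main ⟨z₂, hz₂T⟩ hne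
            refine ⟨Walk.cons h0 w, ?_⟩
            intro z hz
            rcases List.mem_cons.mp (by simpa using hz) with rfl | hz'
            · simp
            · exact hw z hz'
          · have h0 : H2.Adj none (some (some ⟨z₁, hz₁T⟩)) := apex_from_none hz₁K2
            have hne : (⟨z₁, hz₁T⟩ : ↥T) ≠ b0 := by
              intro h; exact hb0z (congrArg Subtype.val h).symm
            obtain ⟨w, hw⟩ := main ⟨z₁, hz₁T⟩ hne
            refine ⟨Walk.cons h0 w, ?_⟩
            intro z hz
            rcases List.mem_cons.mp (by simpa using hz) with rfl | hz'
            · simp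
            · exact hw z hz'
        | some o' =>
          cases o' with
          | none => exact ⟨Walk.nil, by simp⟩
          | some b =>
            have hbb0 : b ≠ b0 := by
              intro h; subst h; simp at hγ
            exact main b hbb0
  -- two internally disjoint paths from bottom apex to top apex
  have hst : (none : Option (Option ↥T)) ≠ some none := by simp
  obtain ⟨q1, q2, hq1p, hq2p, hinter⟩ := cyc hH2conn hH2_2 hst
  -- extraction
  have extract : ∀ (q : H2.Walk none (some none)), q.IsPath →
      ∃ (zz tt : V), zz ∈ T ∧ tt ∈ T ∧ (zz = z₁ ∨ zz = z₂) ∧ (tt = r₁ ∨ tt = r₂) ∧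
        ∃ w : G.Walk zz tt, (∀ a ∈ w.support, a ∈ T) ∧
          (∀ a ∈ w.support, ∃ hb : a ∈ T, some (some ⟨a, hb⟩) ∈ q.support) := by
    intro q hqp
    obtain ⟨w1, h1, q', heq1⟩ := Walk.exists_eq_cons_of_ne hst q
    obtain ⟨v1, rfl, hv1⟩ := apex_adj_none h1
    have hv1' : v1 = some ⟨z₁, hz₁T⟩ ∨ v1 = some ⟨z₂, hz₂T⟩ := by
      simpa [hK2def] using hv1
    obtain ⟨zel, hzel, rfl⟩ : ∃ zel : ↥T, ((zel : V) = z₁ ∨ (zel : V) = z₂) ∧ v1 = some zel := by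
      rcases hv1' with rfl | rfl
      · exact ⟨_, Or.inl rfl, rfl⟩
      · exact ⟨_, Or.inr rfl, rfl⟩
    have hq'p : q'.IsPath := by
      have := hqp; rw [heq1, Walk.cons_isPath_iff] at this; exact this.1
    have hnonil : (none : Option (Option ↥T)) ∉ q'.support := by
      have := hqp; rw [heq1, Walk.cons_isPath_iff] at this; exact this.2
    have hne2 : (some none : Option (Option ↥T)) ≠ some (some zel) := by simp
    obtain ⟨w2, h2, r2, heq2⟩ := Walk.exists_eq_cons_of_ne hne2 q'.reverse
    have hr2sub : ∀ γ ∈ r2.support, γ ∈ q'.support := by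
      intro γ hγ
      have : γ ∈ q'.reverse.support := by
        rw [heq2]; simp [hγ]
      rwa [Walk.support_reverse, List.mem_reverse] at this
    obtain ⟨rel, hrel, rfl⟩ : ∃ rel : ↥T, ((rel : V) = r₁ ∨ (rel : V) = r₂) ∧
        w2 = some (some rel) := by
      rcases h2 with ⟨u, v, hu, hv, hadj1⟩ | ⟨u, hu, hv, _⟩ | ⟨v, hu, _, _⟩
      · rw [Option.some_inj] at hu
        subst hu
        obtain ⟨v', rfl, hv'⟩ := apex_adj_none hadj1
        have hv'' : v' = ⟨r₁, hr₁T⟩ ∨ v' = ⟨r₂, hr₂T⟩ := by simpa [hK1def] using hv'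
        refine ⟨v', ?_, hv⟩
        rcases hv'' with rfl | rfl
        · exact Or.inl rfl
        · exact Or.inr rfl
      · exfalso
        apply hnonil
        rw [← hv]
        exact hr2sub w2 (Walk.start_mem_support r2)
      · exact absurd hu (by simp)
    have ht0notin : (some none : Option (Option ↥T)) ∉ r2.support := by
      have hrp : q'.reverse.IsPath := hq'p.reverse
      rw [heq2, Walk.cons_isPath_iff] at hrp
      exact hrp.2
    have hss : ∀ γ ∈ r2.reverse.support, ∃ b : ↥T, γ = some (some b) := by
      intro γ hγ
      rw [Walk.support_reverse, List.mem_reverse] at hγ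
      cases γ with
      | none => exact absurd (hr2sub _ hγ) hnonil
      | some o =>
        cases o with
        | none => exact absurd hγ ht0notin
        | some b => exact ⟨b, rfl⟩
    obtain ⟨w, hw⟩ := proj2 r2.reverse hss rfl rfl
    refine ⟨↑zel, ↑rel, zel.2, rel.2, hzel, hrel, w, ?_, ?_⟩
    · intro a ha
      obtain ⟨b, hb, _⟩ := hw a ha
      exact hb ▸ b.2
    · intro a ha
      obtain ⟨b, hbeq, hbm⟩ := hw a ha
      rw [Walk.support_reverse, List.mem_reverse] at hbm
      refine ⟨hbeq ▸ b.2, ?_⟩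
      have hmem1 : some (some b) ∈ q'.support := hr2sub _ hbm
      have hmem2 : some (some b) ∈ q.support := by
        rw [heq1]; simp [hmem1]
      have hcast : (⟨a, hbeq ▸ b.2⟩ : ↥T) = b := Subtype.ext hbeq.symm
      rw [hcast]
      exact hmem2
  obtain ⟨zz1, tt1, hzz1T, htt1T, hzz1, htt1, w1, hw1T, hw1q⟩ := extract q1 hq1p
  obtain ⟨zz2, tt2, hzz2T, htt2T, hzz2, htt2, w2, hw2T, hw2q⟩ := extract q2 hq2p
  -- supports are disjoint
  have hdisj0 : ∀ a, a ∈ w1.support → a ∈ w2.support → False := by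
    intro a ha1 ha2
    obtain ⟨hb1, hm1⟩ := hw1q a ha1
    obtain ⟨hb2, hm2⟩ := hw2q a ha2
    have : (⟨a, hb1⟩ : ↥T) = ⟨a, hb2⟩ := rfl
    rcases hinter _ hm1 (this ▸ hm2) with h | h <;> simp at h
  have htt12 : tt1 ≠ tt2 := by
    intro h
    exact hdisj0 tt1 (Walk.end_mem_support w1) (h ▸ Walk.end_mem_support w2)
  have hzz12 : zz1 ≠ zz2 := by
    intro h
    exact hdisj0 zz1 (Walk.start_mem_support w1) (h ▸ Walk.start_mem_support w2)
  -- growing a disjoint pair to a partition with a crossing edge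
  have grow : ∀ P0 Q0 : Set V, P0 ⊆ T → Q0 ⊆ T → (∀ a, a ∈ P0 → a ∈ Q0 → False) →
      (G.induce P0).Connected → (G.induce Q0).Connected → r₁ ∈ P0 → r₂ ∈ Q0 →
      ∃ P Q : Set V, P ⊆ T ∧ Q ⊆ T ∧ Disjoint P Q ∧
        (G.induce P).Connected ∧ (G.induce Q).Connected ∧
        r₁ ∈ P ∧ r₂ ∈ Q ∧ P0 ⊆ P ∧ Q0 ⊆ Q ∧ ∃ x ∈ P, ∃ y ∈ Q, G.Adj x y := by
    intro P0 Q0 hP0T hQ0T hPQ0 hP0c hQ0c hr1P0 hr2Q0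
    set QQ : Set V := {x | ∃ w : G.Walk r₂ x, ∀ z ∈ w.support, z ∈ T ∧ z ∉ P0} with hQQdef
    have hQQT : QQ ⊆ T := by
      rintro x ⟨w, hw⟩
      exact (hw x (Walk.end_mem_support w)).1
    have hr₂QQ : r₂ ∈ QQ := by
      refine ⟨Walk.nil, ?_⟩
      intro z hz
      simp only [Walk.support_nil, List.mem_singleton] at hz
      subst hz
      exact ⟨hr₂T, fun hc => hPQ0 z hc hr2Q0⟩
    have hQ0QQ : Q0 ⊆ QQ := by
      intro y hy
      obtain ⟨w, hw⟩ := aux_walk_of_reach hr2Q0 hy (hQ0c.preconnected _ _)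
      exact ⟨w, fun z hz => ⟨hQ0T (hw z hz), fun hc => hPQ0 z hc (hw z hz)⟩⟩
    have hQQc : (G.induce QQ).Connected := by
      apply aux_connected_hub hr₂QQ
      intro x hx
      obtain ⟨w, hw⟩ := hx
      refine ⟨w.reverse, ?_⟩
      intro z hz
      rw [Walk.support_reverse, List.mem_reverse] at hz
      exact ⟨w.takeUntil z hz, fun a ha => hw a (w.support_takeUntil_subset hz ha)⟩
    set PP : Set V := T \ QQ with hPPdef
    have hP0PP : P0 ⊆ PP := by
      intro x hx
      refine ⟨hP0T hx, ?_⟩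
      rintro ⟨w, hw⟩
      exact (hw x (Walk.end_mem_support w)).2 hx
    have hr1PP : r₁ ∈ PP := hP0PP hr1P0
    have hPPc : (G.induce PP).Connected := by
      apply aux_connected_hub hr1PP
      intro x hx
      obtain ⟨wx, hwx⟩ := MC x hx.1
      obtain ⟨z, hz, wpre, hsub, hfirst, -⟩ :=
        firsthit (T := P0 ∪ QQ) wx (Or.inl hr1P0)
      rcases hz with hzP0 | hzQQ
      · obtain ⟨wtail, hwtail⟩ := aux_walk_of_reach hzP0 hr1P0 (hP0c.preconnected _ _)
        refine ⟨wpre.append wtail, ?_⟩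
        intro a ha
        rw [Walk.mem_support_append_iff] at ha
        rcases ha with ha | ha
        · refine ⟨hwx a (hsub a ha), ?_⟩
          intro haQQ
          have : a = z := hfirst a ha (Or.inr haQQ)
          subst this
          obtain ⟨wz, hwz⟩ := haQQ
          exact (hwz a (Walk.end_mem_support wz)).2 hzP0
        · exact hP0PP (hwtail a ha)
      · exfalso
        apply hx.2
        obtain ⟨wz, hwz⟩ := hzQQ
        refine ⟨wz.append wpre.reverse, ?_⟩
        intro a ha
        rw [Walk.mem_support_append_iff] at ha
        rcases ha with ha | ha
        · exact hwz a ha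
        · rw [Walk.support_reverse, List.mem_reverse] at ha
          refine ⟨hwx a (hsub a ha), ?_⟩
          intro haP0
          have : a = z := hfirst a ha (Or.inl haP0)
          subst this
          exact (hwz a (Walk.end_mem_support wz)).2 haP0
    have BD : ∀ {x y : V} (w : G.Walk x y), (∀ z ∈ w.support, z ∈ T) → x ∉ QQ → y ∈ QQ →
        ∃ p' q', p' ∈ PP ∧ q' ∈ QQ ∧ G.Adj p' q' := by
      intro x y w
      induction w with
      | nil => intro _ hx hy; exact absurd hy hx
      | @cons a m b h p ih =>
        intro hT hx hy
        by_cases hm : m ∈ QQ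
        · exact ⟨a, m, ⟨hT a (by simp), hx⟩, hm, h⟩
        · exact ih (fun z hz => hT z (by simp [hz])) hm hy
    obtain ⟨wr, hwr⟩ := MC r₂ hr₂T
    obtain ⟨p', q', hp', hq', hpq⟩ := BD wr.reverse
      (by intro z hz; rw [Walk.support_reverse, List.mem_reverse] at hz; exact hwr z hz)
      hr1PP.2 hr₂QQ
    exact ⟨PP, QQ, Set.diff_subset, hQQT, Set.disjoint_sdiff_left, hPPc, hQQc,
      hr1PP, hr₂QQ, hP0PP, hQ0QQ, p', hp', q', hq', hpq⟩
  -- final assembly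
  have pairing : ∀ za zb : V, za ≠ zb → (za = z₁ ∨ za = z₂) → (zb = z₁ ∨ zb = z₂) →
      ∀ P Q : Set V, za ∈ P → zb ∈ Q →
        (z₁ ∈ P ∧ z₂ ∈ Q) ∨ (z₂ ∈ P ∧ z₁ ∈ Q) := by
    intro za zb hne hza hzb P Q hP hQ
    rcases hza with rfl | rfl
    · rcases hzb with rfl | rfl
      · exact absurd rfl hne
      · exact Or.inl ⟨hP, hQ⟩
    · rcases hzb with rfl | rfl
      · exact Or.inr ⟨hP, hQ⟩
      · exact absurd rfl hne
  rcases htt1 with rfl | rfl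
  · have htt2' : tt2 = r₂ := by
      rcases htt2 with h | h
      · exact absurd h (Ne.symm htt12)
      · exact h
    subst htt2'
    obtain ⟨P, Q, hPT, hQT, hPQ, hPc, hQc, hr1P, hr2Q, hP0P, hQ0Q, hedge⟩ :=
      grow {a | a ∈ w1.support} {a | a ∈ w2.support} (fun a ha => hw1T a ha)
        (fun a ha => hw2T a ha) hdisj0 (aux_support_connected w1) (aux_support_connected w2)
        (Walk.end_mem_support w1) (Walk.end_mem_support w2)
    exact ⟨P, Q, hPT, hQT, hPQ, hPc, hQc, hr1P, hr2Q,
      pairing zz1 zz2 hzz12 hzz1 hzz2 P Q (hP0P (Walk.start_mem_support w1))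
        (hQ0Q (Walk.start_mem_support w2)), hedge⟩
  · have htt2' : tt2 = r₁ := by
      rcases htt2 with h | h
      · exact h
      · exact absurd h (Ne.symm htt12)
    subst htt2'
    obtain ⟨P, Q, hPT, hQT, hPQ, hPc, hQc, hr1P, hr2Q, hP0P, hQ0Q, hedge⟩ :=
      grow {a | a ∈ w2.support} {a | a ∈ w1.support} (fun a ha => hw2T a ha)
        (fun a ha => hw1T a ha) (fun a ha hb => hdisj0 a hb ha)
        (aux_support_connected w2) (aux_support_connected w1)
        (Walk.end_mem_support w2) (Walk.end_mem_support w1)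
    exact ⟨P, Q, hPT, hQT, hPQ, hPc, hQc, hr1P, hr2Q,
      pairing zz2 zz1 (Ne.symm hzz12) hzz2 hzz1 P Q (hP0P (Walk.start_mem_support w2))
        (hQ0Q (Walk.start_mem_support w1)), hedge⟩

end MengerMain

section Side

variable {A : Set V} {u₀ v₀ : ↥A}

lemma side_lift_adj {x y : ↥A} (h : G.Adj ↑x ↑y) :
    (G.induce A ⊔ fromEdgeSet {s(u₀, v₀)}).Adj x y := by
  rw [sup_adj]
  exact Or.inl h

lemma side_adj_cases {x y : ↥A} (h : (G.induce A ⊔ fromEdgeSet {s(u₀, v₀)}).Adj x y) :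
    G.Adj ↑x ↑y ∨ ((x = u₀ ∧ y = v₀) ∨ (x = v₀ ∧ y = u₀)) := by
  rw [sup_adj] at h
  rcases h with h | h
  · exact Or.inl h
  · rw [fromEdgeSet_adj, Set.mem_singleton_iff, Sym2.eq_iff] at h
    exact Or.inr h.1

lemma side_lift_walk : ∀ {x y : V} (w : G.Walk x y) {S : Set V},
    (∀ z ∈ w.support, z ∈ S) → S ⊆ A → ∀ (hx : x ∈ A) (hy : y ∈ A),
    ∃ W : (G.induce A ⊔ fromEdgeSet {s(u₀, v₀)}).Walk ⟨x, hx⟩ ⟨y, hy⟩,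
      ∀ α ∈ W.support, (α : V) ∈ S := by
  intro x y w
  induction w with
  | nil =>
    intro S hw hSA hx hy
    refine ⟨Walk.nil, ?_⟩
    intro α hα
    simp only [Walk.support_nil, List.mem_singleton] at hα
    subst hα
    exact hw _ (by simp)
  | @cons x' m y' h p ih =>
    intro S hw hSA hx hy
    have hmS : m ∈ S := hw m (by simp)
    have hm : m ∈ A := hSA hmS
    obtain ⟨W, hW⟩ := ih (fun z hz => hw z (by simp [hz])) hSA hm hy
    refine ⟨Walk.cons (side_lift_adj h) W, ?_⟩
    intro α hα
    rcases List.mem_cons.mp (by simpa using hα) with rfl | hα'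
    · exact hw x' (by simp)
    · exact hW α hα'

lemma side_proj_walk : ∀ {x y : ↥A}
    (w : (G.induce A ⊔ fromEdgeSet {s(u₀, v₀)}).Walk x y) {Y : Set ↥A},
    (∀ α ∈ w.support, α ∈ Y) → ¬(u₀ ∈ Y ∧ v₀ ∈ Y) →
    ∃ w' : G.Walk ↑x ↑y, ∀ z ∈ w'.support, ∃ α ∈ Y, (α : V) = z := by
  intro x y w
  induction w with
  | nil =>
    intro Y hw hY
    refine ⟨Walk.nil, ?_⟩
    intro z hz
    simp only [Walk.support_nil, List.mem_singleton] at hz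
    subst hz
    exact ⟨_, hw _ (by simp), rfl⟩
  | @cons x' m y' h p ih =>
    intro Y hw hY
    have hx'Y : x' ∈ Y := hw x' (by simp)
    have hmY : m ∈ Y := hw m (by simp)
    have hadj : G.Adj ↑x' ↑m := by
      rcases side_adj_cases h with h' | ⟨rfl, rfl⟩ | ⟨rfl, rfl⟩
      · exact h'
      · exact absurd ⟨hx'Y, hmY⟩ hY
      · exact absurd ⟨hmY, hx'Y⟩ hY
    obtain ⟨w', hw'⟩ := ih (fun α hα => hw α (by simp [hα])) hY
    refine ⟨Walk.cons hadj w', ?_⟩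
    intro z hz
    rcases List.mem_cons.mp (by simpa using hz) with rfl | hz'
    · exact ⟨x', hx'Y, rfl⟩
    · exact hw' z hz'

lemma side_lift_conn {S : Set V} (hSA : S ⊆ A) (hc : (G.induce S).Connected)
    {x0 : V} (hx0 : x0 ∈ S) :
    ((G.induce A ⊔ fromEdgeSet {s(u₀, v₀)}).induce {y : ↥A | (y : V) ∈ S}).Connected := by
  apply aux_connected_hub (u := (⟨x0, hSA hx0⟩ : ↥A)) (by exact hx0)
  intro y hy
  obtain ⟨w, hw⟩ := aux_walk_of_reach (G := G) (S := S) (hy : (y : V) ∈ S) hx0 (hc.preconnected ⟨_, hy⟩ ⟨_, hx0⟩)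
  obtain ⟨W, hW⟩ := side_lift_walk (u₀ := u₀) (v₀ := v₀) w hw hSA y.2 (hSA hx0)
  have hyy : (⟨(y : V), y.2⟩ : ↥A) = y := rfl
  exact ⟨hyy ▸ W, by intro α hα; exact hW α (by simpa [hyy] using hα)⟩

lemma side_desc_conn {Y : Set ↥A} (hY : ¬(u₀ ∈ Y ∧ v₀ ∈ Y))
    (hc : ((G.induce A ⊔ fromEdgeSet {s(u₀, v₀)}).induce Y).Connected)
    {α0 : ↥A} (hα0 : α0 ∈ Y) :
    (G.induce (Subtype.val '' Y)).Connected := by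
  apply aux_connected_hub (u := (α0 : V)) (Set.mem_image_of_mem _ hα0)
  rintro z ⟨α, hα, rfl⟩
  obtain ⟨w, hw⟩ := aux_walk_of_reach (G := G.induce A ⊔ fromEdgeSet {s(u₀, v₀)}) (S := Y) hα hα0 (hc.preconnected ⟨α, hα⟩ ⟨α0, hα0⟩)
  obtain ⟨w', hw'⟩ := side_proj_walk w hw hY
  refine ⟨w', ?_⟩
  intro a ha
  obtain ⟨β, hβ, rfl⟩ := hw' a ha
  exact ⟨β, hβ, rfl⟩

end Side

section Perm

variable {W' : Type*} {H : SimpleGraph W'}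

lemma swap34On {a b c d : W'} {P1 P2 P3 P4 : Set W'}
    (h : RootedK4MinorOn H a b c d P1 P2 P3 P4) :
    RootedK4MinorOn H a b d c P1 P2 P4 P3 := by
  obtain ⟨h1, h2, h3, h4, c1, c2, c3, c4, d12, d13, d14, d23, d24, d34,
    a12, a13, a14, a23, a24, a34⟩ := h
  exact ⟨h1, h2, h4, h3, c1, c2, c4, c3, d12, d14, d13, d24, d23, d34.symm,
    a12, a14, a13, a24, a23, by obtain ⟨x, hx, y, hy, hxy⟩ := a34; exact ⟨y, hy, x, hx, hxy.symm⟩⟩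

lemma swapHalves {a b c d : W'} (h : RootedK4Minor H a b c d) : RootedK4Minor H c d a b := by
  obtain ⟨P1, P2, P3, P4, h1, h2, h3, h4, c1, c2, c3, c4, d12, d13, d14, d23, d24, d34,
    a12, a13, a14, a23, a24, a34⟩ := h
  refine ⟨P3, P4, P1, P2, h3, h4, h1, h2, c3, c4, c1, c2, d34, d13.symm, d23.symm,
    d14.symm, d24.symm, d12, a34, ?_, ?_, ?_, ?_, a12⟩
  · obtain ⟨x, hx, y, hy, hxy⟩ := a13; exact ⟨y, hy, x, hx, hxy.symm⟩
  · obtain ⟨x, hx, y, hy, hxy⟩ := a23; exact ⟨y, hy, x, hx, hxy.symm⟩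
  · obtain ⟨x, hx, y, hy, hxy⟩ := a14; exact ⟨y, hy, x, hx, hxy.symm⟩
  · obtain ⟨x, hx, y, hy, hxy⟩ := a24; exact ⟨y, hy, x, hx, hxy.symm⟩

lemma swap34Minor {a b c d : W'} (h : RootedK4Minor H a b c d) : RootedK4Minor H a b d c := by
  obtain ⟨P1, P2, P3, P4, hm⟩ := h
  exact ⟨P1, P2, P4, P3, swap34On hm⟩

end Perm

lemma swapHalvesOn {W' : Type*} {H : SimpleGraph W'} {a b c d : W'} {P1 P2 P3 P4 : Set W'}
    (h : RootedK4MinorOn H a b c d P1 P2 P3 P4) :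
    RootedK4MinorOn H c d a b P3 P4 P1 P2 := by
  obtain ⟨h1, h2, h3, h4, c1, c2, c3, c4, d12, d13, d14, d23, d24, d34,
    a12, a13, a14, a23, a24, a34⟩ := h
  refine ⟨h3, h4, h1, h2, c3, c4, c1, c2, d34, d13.symm, d23.symm,
    d14.symm, d24.symm, d12, a34, ?_, ?_, ?_, ?_, a12⟩
  · obtain ⟨x, hx, y, hy, hxy⟩ := a13; exact ⟨y, hy, x, hx, hxy.symm⟩
  · obtain ⟨x, hx, y, hy, hxy⟩ := a23; exact ⟨y, hy, x, hx, hxy.symm⟩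
  · obtain ⟨x, hx, y, hy, hxy⟩ := a14; exact ⟨y, hy, x, hx, hxy.symm⟩
  · obtain ⟨x, hx, y, hy, hxy⟩ := a24; exact ⟨y, hy, x, hx, hxy.symm⟩

lemma fwd_side {S T : Set V} {r₁ r₂ p q z₁ z₂ : V}
    (hsep : ∀ ⦃x y⦄, G.Adj x y → x ∈ S ∧ y ∈ S ∨ x ∈ T ∧ y ∈ T)
    (hcut : S ∩ T = {r₁, r₂}) (huniv : S ∪ T = Set.univ)
    (hr12 : r₁ ≠ r₂) (hr₁S : r₁ ∈ S) (hr₂S : r₂ ∈ S)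
    (hpS : p ∈ S) (hpT : p ∉ T) (hqS : q ∈ S) (hqT : q ∉ T)
    {X1 X2 X3 X4 : Set V}
    (hm : RootedK4MinorOn G p q z₁ z₂ X1 X2 X3 X4)
    (ht₁ : r₁ ∈ X3) (ht₂ : r₂ ∈ X4) :
    RootedK4Minor (G.induce S ⊔ fromEdgeSet {s(⟨r₁, hr₁S⟩, ⟨r₂, hr₂S⟩)})
      ⟨p, hpS⟩ ⟨q, hqS⟩ ⟨r₁, hr₁S⟩ ⟨r₂, hr₂S⟩ := by
  obtain ⟨hp1, hq2, hz3, hz4, c1, c2, c3, c4, d12, d13, d14, d23, d24, d34,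
    a12, a13, a14, a23, a24, a34⟩ := hm
  have h1r : r₁ ∉ X1 := fun h => Set.disjoint_left.mp d13 h ht₁
  have h1r' : r₂ ∉ X1 := fun h => Set.disjoint_left.mp d14 h ht₂
  have h2r : r₁ ∉ X2 := fun h => Set.disjoint_left.mp d23 h ht₁
  have h2r' : r₂ ∉ X2 := fun h => Set.disjoint_left.mp d24 h ht₂
  have X1T : ∀ x ∈ X1, x ∉ T := by
    intro x hx hxT
    obtain ⟨w, hw⟩ := aux_walk_of_reach hp1 hx (c1.preconnected ⟨p, hp1⟩ ⟨x, hx⟩)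
    obtain ⟨z, hz, hzc⟩ := crossT hsep w hpT hxT
    have hz1 : z ∈ X1 := hw z hz
    have : z ∈ ({r₁, r₂} : Set V) := hcut ▸ hzc
    rcases this with rfl | rfl
    exacts [h1r hz1, h1r' hz1]
  have X2T : ∀ x ∈ X2, x ∉ T := by
    intro x hx hxT
    obtain ⟨w, hw⟩ := aux_walk_of_reach hq2 hx (c2.preconnected ⟨q, hq2⟩ ⟨x, hx⟩)
    obtain ⟨z, hz, hzc⟩ := crossT hsep w hqT hxT
    have hz1 : z ∈ X2 := hw z hz
    have : z ∈ ({r₁, r₂} : Set V) := hcut ▸ hzc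
    rcases this with rfl | rfl
    exacts [h2r hz1, h2r' hz1]
  have X1S : X1 ⊆ S := fun x hx => by
    rcases (huniv ▸ Set.mem_univ x : x ∈ S ∪ T) with h | h
    exacts [h, absurd h (X1T x hx)]
  have X2S : X2 ⊆ S := fun x hx => by
    rcases (huniv ▸ Set.mem_univ x : x ∈ S ∪ T) with h | h
    exacts [h, absurd h (X2T x hx)]
  have hX3c : (G.induce (X3 ∩ S)).Connected := by
    apply aux_connected_hub (u := r₁) (Set.mem_inter ht₁ hr₁S)
    rintro x ⟨hx3, hxS⟩
    obtain ⟨w, hw⟩ := aux_walk_of_reach hx3 ht₁ (c3.preconnected ⟨x, hx3⟩ ⟨r₁, ht₁⟩)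
    obtain ⟨t', ht', qq, hqq⟩ := toCut hsep hcut w hxS hr₁S
    have hX : ∀ z ∈ qq.support, z ∈ X3 ∩ S := fun z hz => ⟨hw z (hqq z hz).2, (hqq z hz).1⟩
    have ht'3 : t' ∈ X3 := (hX t' (Walk.end_mem_support qq)).1
    have hne : t' ≠ r₂ := fun h => Set.disjoint_left.mp d34 (h ▸ ht'3) ht₂
    have : t' = r₁ := by tauto
    subst this
    exact ⟨qq, hX⟩
  have hX4c : (G.induce (X4 ∩ S)).Connected := by
    apply aux_connected_hub (u := r₂) (Set.mem_inter ht₂ hr₂S)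
    rintro x ⟨hx4, hxS⟩
    obtain ⟨w, hw⟩ := aux_walk_of_reach hx4 ht₂ (c4.preconnected ⟨x, hx4⟩ ⟨r₂, ht₂⟩)
    obtain ⟨t', ht', qq, hqq⟩ := toCut hsep hcut w hxS hr₂S
    have hX : ∀ z ∈ qq.support, z ∈ X4 ∩ S := fun z hz => ⟨hw z (hqq z hz).2, (hqq z hz).1⟩
    have ht'4 : t' ∈ X4 := (hX t' (Walk.end_mem_support qq)).1
    have hne : t' ≠ r₁ := fun h => Set.disjoint_left.mp d34 ht₁ (h ▸ ht'4)
    have : t' = r₂ := by tauto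
    subst this
    exact ⟨qq, hX⟩
  refine ⟨{y : ↥S | (y : V) ∈ X1}, {y : ↥S | (y : V) ∈ X2}, {y : ↥S | (y : V) ∈ X3 ∩ S},
    {y : ↥S | (y : V) ∈ X4 ∩ S}, hp1, hq2, ⟨ht₁, hr₁S⟩, ⟨ht₂, hr₂S⟩,
    side_lift_conn X1S c1 hp1, side_lift_conn X2S c2 hq2,
    side_lift_conn Set.inter_subset_right hX3c ⟨ht₁, hr₁S⟩,
    side_lift_conn Set.inter_subset_right hX4c ⟨ht₂, hr₂S⟩,
    ?_, ?_, ?_, ?_, ?_, ?_, ?_, ?_, ?_, ?_, ?_, ?_⟩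
  · exact Set.disjoint_left.mpr fun α h1 h2 => Set.disjoint_left.mp d12 h1 h2
  · exact Set.disjoint_left.mpr fun α h1 h2 => Set.disjoint_left.mp d13 h1 h2.1
  · exact Set.disjoint_left.mpr fun α h1 h2 => Set.disjoint_left.mp d14 h1 h2.1
  · exact Set.disjoint_left.mpr fun α h1 h2 => Set.disjoint_left.mp d23 h1 h2.1
  · exact Set.disjoint_left.mpr fun α h1 h2 => Set.disjoint_left.mp d24 h1 h2.1
  · exact Set.disjoint_left.mpr fun α h1 h2 => Set.disjoint_left.mp d34 h1.1 h2.1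
  · obtain ⟨x, hx, y, hy, hxy⟩ := a12
    exact ⟨⟨x, X1S hx⟩, hx, ⟨y, X2S hy⟩, hy, side_lift_adj hxy⟩
  · obtain ⟨x, hx, y, hy, hxy⟩ := a13
    rcases hsep hxy with ⟨hxS', hyS'⟩ | ⟨hxT', hyT'⟩
    · exact ⟨⟨x, X1S hx⟩, hx, ⟨y, hyS'⟩, ⟨hy, hyS'⟩, side_lift_adj hxy⟩
    · exact absurd hxT' (X1T x hx)
  · obtain ⟨x, hx, y, hy, hxy⟩ := a14
    rcases hsep hxy with ⟨hxS', hyS'⟩ | ⟨hxT', hyT'⟩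
    · exact ⟨⟨x, X1S hx⟩, hx, ⟨y, hyS'⟩, ⟨hy, hyS'⟩, side_lift_adj hxy⟩
    · exact absurd hxT' (X1T x hx)
  · obtain ⟨x, hx, y, hy, hxy⟩ := a23
    rcases hsep hxy with ⟨hxS', hyS'⟩ | ⟨hxT', hyT'⟩
    · exact ⟨⟨x, X2S hx⟩, hx, ⟨y, hyS'⟩, ⟨hy, hyS'⟩, side_lift_adj hxy⟩
    · exact absurd hxT' (X2T x hx)
  · obtain ⟨x, hx, y, hy, hxy⟩ := a24
    rcases hsep hxy with ⟨hxS', hyS'⟩ | ⟨hxT', hyT'⟩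
    · exact ⟨⟨x, X2S hx⟩, hx, ⟨y, hyS'⟩, ⟨hy, hyS'⟩, side_lift_adj hxy⟩
    · exact absurd hxT' (X2T x hx)
  · refine ⟨⟨r₁, hr₁S⟩, ⟨ht₁, hr₁S⟩, ⟨r₂, hr₂S⟩, ⟨ht₂, hr₂S⟩, ?_⟩
    rw [sup_adj, fromEdgeSet_adj]
    exact Or.inr ⟨rfl, fun h => hr12 (congrArg Subtype.val h)⟩

lemma rev_core [DecidableEq V] {S T : Set V} {ra rb p q z₁ z₂ : V}
    (hsep : ∀ ⦃x y⦄, G.Adj x y → x ∈ S ∧ y ∈ S ∨ x ∈ T ∧ y ∈ T)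
    (hcut : S ∩ T = {ra, rb}) (h2' : ∀ w : V, (G.induce {w}ᶜ).Connected)
    (hrab : ra ≠ rb) (hraS : ra ∈ S) (hrbS : rb ∈ S) (hraT : ra ∈ T) (hrbT : rb ∈ T)
    (hz₁T : z₁ ∈ T) (hz₁S : z₁ ∉ S) (hz₂T : z₂ ∈ T) (hz₂S : z₂ ∉ S) (hz12 : z₁ ≠ z₂)
    (hpS : p ∈ S) (hqS : q ∈ S)
    (hmin : RootedK4Minor (G.induce S ⊔ fromEdgeSet {s(⟨ra, hraS⟩, ⟨rb, hrbS⟩)})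
      ⟨p, hpS⟩ ⟨q, hqS⟩ ⟨ra, hraS⟩ ⟨rb, hrbS⟩) :
    RootedK4Minor G p q z₁ z₂ := by
  obtain ⟨Y1, Y2, Y3, Y4, h1, h2, h3, h4, c1, c2, c3, c4, d12, d13, d14, d23, d24, d34,
    a12, a13, a14, a23, a24, a34⟩ := hmin
  set u₀ : ↥S := ⟨ra, hraS⟩ with hu₀
  set v₀ : ↥S := ⟨rb, hrbS⟩ with hv₀
  have hu1 : u₀ ∉ Y1 := fun h => Set.disjoint_left.mp d13 h h3
  have hv1 : v₀ ∉ Y1 := fun h => Set.disjoint_left.mp d14 h h4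
  have hu2 : u₀ ∉ Y2 := fun h => Set.disjoint_left.mp d23 h h3
  have hv2 : v₀ ∉ Y2 := fun h => Set.disjoint_left.mp d24 h h4
  have hv3 : v₀ ∉ Y3 := fun h => Set.disjoint_left.mp d34 h h4
  have hu4 : u₀ ∉ Y4 := fun h => Set.disjoint_left.mp d34 h3 h
  have notin : ∀ (Y : Set ↥S) (w : ↥S), w ∉ Y → (w : V) ∉ Subtype.val '' Y := by
    rintro Y w hw ⟨α, hα, hval⟩
    exact hw ((Subtype.ext hval : α = w) ▸ hα)
  have imgS : ∀ Y : Set ↥S, Subtype.val '' Y ⊆ S := by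
    rintro Y z ⟨α, _, rfl⟩; exact α.2
  have imgdisj : ∀ Ya Yb : Set ↥S, Disjoint Ya Yb →
      Disjoint (Subtype.val '' Ya) (Subtype.val '' Yb) := by
    intro Ya Yb hab
    rw [Set.disjoint_left]
    rintro z ⟨α, hα, rfl⟩ ⟨β, hβ, hval⟩
    exact Set.disjoint_left.mp hab hα ((Subtype.ext hval.symm : α = β) ▸ hβ)
  have cutmem : ∀ z, z ∈ S → z ∈ T → z = ra ∨ z = rb := by
    intro z hS hT
    have : z ∈ ({ra, rb} : Set V) := hcut ▸ ⟨hS, hT⟩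
    simpa using this
  obtain ⟨P, Q, hPT, hQT, hPQ, hPc, hQc, hraP, hrbQ, hpair, hedge⟩ :=
    menger hsep hcut h2' hrab hraS hrbS hraT hrbT hz₁T hz₁S hz₂T hz₂S hz12
  have getadj : ∀ Ya Yb : Set ↥S, (∃ α ∈ Ya, ∃ β ∈ Yb,
      (G.induce S ⊔ fromEdgeSet {s(u₀, v₀)}).Adj α β) →
      ¬(u₀ ∈ Ya ∧ v₀ ∈ Yb) → ¬(v₀ ∈ Ya ∧ u₀ ∈ Yb) →
      ∃ x ∈ Subtype.val '' Ya, ∃ y ∈ Subtype.val '' Yb, G.Adj x y := by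
    rintro Ya Yb ⟨α, hα, β, hβ, hαβ⟩ hn1 hn2
    rcases side_adj_cases hαβ with h' | ⟨rfl, rfl⟩ | ⟨rfl, rfl⟩
    · exact ⟨↑α, ⟨α, hα, rfl⟩, ↑β, ⟨β, hβ, rfl⟩, h'⟩
    · exact absurd ⟨hα, hβ⟩ hn1
    · exact absurd ⟨hα, hβ⟩ hn2
  have imgTdisj : ∀ (Y : Set ↥S) (R : Set V), R ⊆ T → u₀ ∉ Y → v₀ ∉ Y →
      ∀ z, z ∈ Subtype.val '' Y → z ∈ R → False := by
    intro Y R hRT hu hv z hzY hzR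
    rcases cutmem z (imgS Y hzY) (hRT hzR) with rfl | rfl
    · exact notin Y u₀ hu hzY
    · exact notin Y v₀ hv hzY
  have core : ∀ z₁' z₂' : V, z₁' ∈ P → z₂' ∈ Q → RootedK4Minor G p q z₁' z₂' := by
    intro z₁' z₂' hz₁'P hz₂'Q
    refine ⟨Subtype.val '' Y1, Subtype.val '' Y2, Subtype.val '' Y3 ∪ P,
      Subtype.val '' Y4 ∪ Q, ⟨⟨p, hpS⟩, h1, rfl⟩, ⟨⟨q, hqS⟩, h2, rfl⟩,
      Or.inr hz₁'P, Or.inr hz₂'Q,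
      side_desc_conn (fun h => hv1 h.2) c1 h1, side_desc_conn (fun h => hv2 h.2) c2 h2,
      ?_, ?_, ?_, ?_, ?_, ?_, ?_, ?_, ?_, ?_, ?_, ?_, ?_, ?_⟩
    · exact aux_union (x := ra) ⟨u₀, h3, rfl⟩ hraP (side_desc_conn (fun h => hv3 h.2) c3 h3) hPc
    · exact aux_union (x := rb) ⟨v₀, h4, rfl⟩ hrbQ (side_desc_conn (fun h => hu4 h.1) c4 h4) hQc
    · exact imgdisj Y1 Y2 d12
    · rw [Set.disjoint_union_right]
      exact ⟨imgdisj Y1 Y3 d13,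
        Set.disjoint_left.mpr fun z hz1 hzP => imgTdisj Y1 P hPT hu1 hv1 z hz1 hzP⟩
    · rw [Set.disjoint_union_right]
      exact ⟨imgdisj Y1 Y4 d14,
        Set.disjoint_left.mpr fun z hz1 hzQ => imgTdisj Y1 Q hQT hu1 hv1 z hz1 hzQ⟩
    · rw [Set.disjoint_union_right]
      exact ⟨imgdisj Y2 Y3 d23,
        Set.disjoint_left.mpr fun z hz1 hzP => imgTdisj Y2 P hPT hu2 hv2 z hz1 hzP⟩
    · rw [Set.disjoint_union_right]
      exact ⟨imgdisj Y2 Y4 d24,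
        Set.disjoint_left.mpr fun z hz1 hzQ => imgTdisj Y2 Q hQT hu2 hv2 z hz1 hzQ⟩
    · rw [Set.disjoint_union_left, Set.disjoint_union_right, Set.disjoint_union_right]
      refine ⟨⟨imgdisj Y3 Y4 d34, ?_⟩, ?_, hPQ⟩
      · refine Set.disjoint_left.mpr fun z hz3 hzQ => ?_
        rcases cutmem z (imgS Y3 hz3) (hQT hzQ) with rfl | rfl
        · exact Set.disjoint_left.mp hPQ hraP hzQ
        · exact notin Y3 v₀ hv3 hz3
      · refine Set.disjoint_left.mpr fun z hzP hz4 => ?_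
        rcases cutmem z (imgS Y4 hz4) (hPT hzP) with rfl | rfl
        · exact notin Y4 u₀ hu4 hz4
        · exact Set.disjoint_left.mp hPQ hzP hrbQ
    · exact getadj Y1 Y2 a12 (fun h => hu1 h.1) (fun h => hv1 h.1)
    · obtain ⟨x, hx, y, hy, hxy⟩ := getadj Y1 Y3 a13 (fun h => hu1 h.1) (fun h => hv1 h.1)
      exact ⟨x, hx, y, Or.inl hy, hxy⟩
    · obtain ⟨x, hx, y, hy, hxy⟩ := getadj Y1 Y4 a14 (fun h => hu1 h.1) (fun h => hv1 h.1)
      exact ⟨x, hx, y, Or.inl hy, hxy⟩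
    · obtain ⟨x, hx, y, hy, hxy⟩ := getadj Y2 Y3 a23 (fun h => hu2 h.1) (fun h => hv2 h.1)
      exact ⟨x, hx, y, Or.inl hy, hxy⟩
    · obtain ⟨x, hx, y, hy, hxy⟩ := getadj Y2 Y4 a24 (fun h => hu2 h.1) (fun h => hv2 h.1)
      exact ⟨x, hx, y, Or.inl hy, hxy⟩
    · obtain ⟨α, hα, β, hβ, hαβ⟩ := a34
      rcases side_adj_cases hαβ with h' | ⟨rfl, rfl⟩ | ⟨rfl, rfl⟩
      · exact ⟨↑α, Or.inl ⟨α, hα, rfl⟩, ↑β, Or.inl ⟨β, hβ, rfl⟩, h'⟩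
      · obtain ⟨x, hxP, y, hyQ, hxy⟩ := hedge
        exact ⟨x, Or.inr hxP, y, Or.inr hyQ, hxy⟩
      · obtain ⟨x, hxP, y, hyQ, hxy⟩ := hedge
        exact ⟨x, Or.inr hxP, y, Or.inr hyQ, hxy⟩
  rcases hpair with ⟨hz1P, hz2Q⟩ | ⟨hz2P, hz1Q⟩
  · exact core z₁ z₂ hz1P hz2Q
  · exact swap34Minor (core z₂ z₁ hz2P hz1Q)

end Sep9

set_option maxHeartbeats 4000000 in
/-- reduction of a rooted `K₄`-minor across a `(2,2)`-separation of
order 2 in a 2-connected graph. -/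
theorem separation22_rooted_K4_minor [Fintype V] (G : SimpleGraph V) (a b c d u v : V)
    (A B : Set V) (h2 : KConnected 2 G) (hsep : IsSeparation G A B)
    (hcut : A ∩ B = {u, v}) (huv : u ≠ v)
    (huA : u ∈ A) (huB : u ∈ B) (hvA : v ∈ A) (hvB : v ∈ B)
    (ha : a ∈ A \ B) (hb : b ∈ A \ B) (hc : c ∈ B \ A) (hd : d ∈ B \ A)
    (hab : a ≠ b) (hac : a ≠ c) (had : a ≠ d) (hbc : b ≠ c) (hbd : b ≠ d) (hcd : c ≠ d) :
    RootedK4Minor G a b c d ↔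
      (RootedK4Minor (G.induce A ⊔ fromEdgeSet {s(⟨u, huA⟩, ⟨v, hvA⟩)})
          ⟨a, ha.1⟩ ⟨b, hb.1⟩ ⟨u, huA⟩ ⟨v, hvA⟩ ∨
       RootedK4Minor (G.induce B ⊔ fromEdgeSet {s(⟨u, huB⟩, ⟨v, hvB⟩)})
          ⟨u, huB⟩ ⟨v, hvB⟩ ⟨c, hc.1⟩ ⟨d, hd.1⟩)    := by
  classical
  obtain ⟨huniv, hadjsep, hABne, hBAne⟩ := hsep
  have h2' : ∀ w : V, (G.induce {w}ᶜ).Connected := fun w =>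
    h2.2 {w} (Set.finite_singleton w) (by simp)
  have hadj' : ∀ ⦃x y⦄, G.Adj x y → x ∈ B ∧ y ∈ B ∨ x ∈ A ∧ y ∈ A := fun x y h =>
    (hadjsep h).symm
  have hcut' : B ∩ A = {u, v} := by rw [Set.inter_comm]; exact hcut
  have huniv' : B ∪ A = Set.univ := by rw [Set.union_comm]; exact huniv
  constructor
  · rintro ⟨X1, X2, X3, X4, hm⟩
    obtain ⟨hp1, hq2, hz3, hz4, c1, c2, c3, c4, d12, d13, d14, d23, d24, d34,
      a12, a13, a14, a23, a24, a34⟩ := hm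
    have hm : RootedK4MinorOn G a b c d X1 X2 X3 X4 :=
      ⟨hp1, hq2, hz3, hz4, c1, c2, c3, c4, d12, d13, d14, d23, d24, d34,
        a12, a13, a14, a23, a24, a34⟩
    have tokfact : ∀ (Xa Xc : Set V) (pa pc : V), (G.induce Xa).Connected →
        (G.induce Xc).Connected → pa ∈ Xa → pa ∈ A \ B → pc ∈ Xc → pc ∈ B \ A →
        (∃ x ∈ Xa, ∃ y ∈ Xc, G.Adj x y) →
        (u ∈ Xa ∨ v ∈ Xa) ∨ (u ∈ Xc ∨ v ∈ Xc) := by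
      intro Xa Xc pa pc ca cc hpa hpa' hpc hpc' hwit
      obtain ⟨x, hx, y, hy, hxy⟩ := hwit
      rcases hadjsep hxy with ⟨hxA, hyA⟩ | ⟨hxB, hyB⟩
      · by_cases hyB : y ∈ B
        · have hyc : y ∈ ({u, v} : Set V) := hcut ▸ ⟨hyA, hyB⟩
          rcases hyc with rfl | rfl
          exacts [Or.inr (Or.inl hy), Or.inr (Or.inr hy)]
        · obtain ⟨w, hw⟩ := Sep9.aux_walk_of_reach hy hpc (cc.preconnected ⟨y, hy⟩ ⟨pc, hpc⟩)
          obtain ⟨z, hz, hzc⟩ := Sep9.crossT hadjsep w hyB hpc'.1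
          have hzX : z ∈ Xc := hw z hz
          have hzc' : z ∈ ({u, v} : Set V) := hcut ▸ hzc
          rcases hzc' with rfl | rfl
          exacts [Or.inr (Or.inl hzX), Or.inr (Or.inr hzX)]
      · by_cases hxA : x ∈ A
        · have hxc : x ∈ ({u, v} : Set V) := hcut ▸ ⟨hxA, hxB⟩
          rcases hxc with rfl | rfl
          exacts [Or.inl (Or.inl hx), Or.inl (Or.inr hx)]
        · obtain ⟨w, hw⟩ := Sep9.aux_walk_of_reach hpa hx (ca.preconnected ⟨pa, hpa⟩ ⟨x, hx⟩)
          obtain ⟨z, hz, hzc⟩ := Sep9.crossT hadjsep w hpa'.2 hxB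
          have hzX : z ∈ Xa := hw z hz
          have hzc' : z ∈ ({u, v} : Set V) := hcut ▸ hzc
          rcases hzc' with rfl | rfl
          exacts [Or.inl (Or.inl hzX), Or.inl (Or.inr hzX)]
    have tok13 := tokfact X1 X3 a c c1 c3 hp1 ha hz3 hc a13
    have tok14 := tokfact X1 X4 a d c1 c4 hp1 ha hz4 hd a14
    have tok23 := tokfact X2 X3 b c c2 c3 hq2 hb hz3 hc a23
    have tok24 := tokfact X2 X4 b d c2 c4 hq2 hb hz4 hd a24
    by_cases hT1 : u ∈ X1 ∨ v ∈ X1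
    · by_cases hT2 : u ∈ X2 ∨ v ∈ X2
      · refine Or.inr ?_
        rcases hT1 with hu1 | hv1 <;> rcases hT2 with hu2 | hv2
        · exact absurd hu2 (Set.disjoint_left.mp d12 hu1)
        · exact Sep9.swapHalves (Sep9.fwd_side hadj' hcut' huniv' huv huB hvB
            hc.1 hc.2 hd.1 hd.2 (Sep9.swapHalvesOn hm) hu1 hv2)
        · exact Sep9.swapHalves (Sep9.fwd_side hadj' hcut' huniv' huv huB hvB
            hc.1 hc.2 hd.1 hd.2 (Sep9.swap34On (Sep9.swapHalvesOn hm)) hu2 hv1)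
        · exact absurd hv2 (Set.disjoint_left.mp d12 hv1)
      · have hT3 : u ∈ X3 ∨ v ∈ X3 := tok23.resolve_left hT2
        have hT4 : u ∈ X4 ∨ v ∈ X4 := tok24.resolve_left hT2
        exfalso
        rcases hT1 with h1 | h1 <;> rcases hT3 with h3 | h3 <;> rcases hT4 with h4 | h4 <;>
          first
          | exact Set.disjoint_left.mp d13 h1 h3
          | exact Set.disjoint_left.mp d14 h1 h4
          | exact Set.disjoint_left.mp d34 h3 h4
    · have hT3 : u ∈ X3 ∨ v ∈ X3 := tok13.resolve_left hT1
      have hT4 : u ∈ X4 ∨ v ∈ X4 := tok14.resolve_left hT1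
      refine Or.inl ?_
      rcases hT3 with h3 | h3 <;> rcases hT4 with h4 | h4
      · exact absurd h4 (Set.disjoint_left.mp d34 h3)
      · exact Sep9.fwd_side hadjsep hcut huniv huv huA hvA ha.1 ha.2 hb.1 hb.2 hm h3 h4
      · exact Sep9.fwd_side hadjsep hcut huniv huv huA hvA ha.1 ha.2 hb.1 hb.2
          (Sep9.swap34On hm) h4 h3
      · exact absurd h4 (Set.disjoint_left.mp d34 h3)
  · rintro (h | h)
    · exact Sep9.rev_core hadjsep hcut h2' huv huA hvA huB hvB hc.1 hc.2 hd.1 hd.2 hcd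
        ha.1 hb.1 h
    · exact Sep9.swapHalves (Sep9.rev_core hadj' hcut' h2' huv huB hvB huA hvA
        ha.1 ha.2 hb.1 hb.2 hab hc.1 hd.1 (Sep9.swapHalves h))
end

section
/- Let G be a graph with distinct vertices a, b, c, d such that a and b both have neighbourhood exactly {u, v} for some vertices u, v ∉ {a,b,c,d}. Let G' be obtained from G by deleting a and b and adding the edge uv. Then G contains a K_4-minor rooted at a, b, c, d if and only if G' contains a K_4-minor rooted at u, v, c, d. -/
open SimpleGraph

variable {V : Type*}

section EarReductionAux
open Relation


def AdjOn (G : SimpleGraph V) (S : Set V) (x y : V) : Prop := G.Adj x y ∧ x ∈ S ∧ y ∈ S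

lemma adjOn_symm {G : SimpleGraph V} {S : Set V} : Symmetric (AdjOn G S) :=
  fun _ _ h => ⟨h.1.symm, h.2.2, h.2.1⟩

lemma induce_connected_iff' (G : SimpleGraph V) (S : Set V) :
    (G.induce S).Connected ↔ S.Nonempty ∧ ∀ x ∈ S, ∀ y ∈ S, ReflTransGen (AdjOn G S) x y := by
  rw [connected_iff]
  constructor
  · rintro ⟨hp, hne⟩
    obtain ⟨x⟩ := hne
    refine ⟨⟨x, x.2⟩, ?_⟩
    intro p hp' q hq
    have := hp ⟨p, hp'⟩ ⟨q, hq⟩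
    rw [reachable_iff_reflTransGen] at this
    exact ReflTransGen.lift (p := AdjOn G S) (Subtype.val)
      (fun a b hab => ⟨hab, a.2, b.2⟩) _ _ this
  · rintro ⟨⟨x, hx⟩, h⟩
    refine ⟨?_, ⟨⟨x, hx⟩⟩⟩
    rintro ⟨p, hp⟩ ⟨q, hq⟩
    rw [reachable_iff_reflTransGen]
    have key : ∀ (c : V), ReflTransGen (AdjOn G S) c q → ∀ hc : c ∈ S,
        ReflTransGen ((G.induce S).Adj) ⟨c, hc⟩ ⟨q, hq⟩ := by
      intro c hchain
      induction hchain using ReflTransGen.head_induction_on with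
      | refl => intro hc; rfl
      | head hab _ ih =>
          intro hc
          exact ReflTransGen.head (by exact hab.1) (ih hab.2.2)
    exact key p (h p hp q hq) hp

/-- Removing a vertex `a` whose only neighbour in `A` is `u` keeps `A \ {a}` connected. -/
lemma shrink_aux {G : SimpleGraph V} {A : Set V} {a u : V} (hu : u ∈ A) (hua : u ≠ a)
    (hN : ∀ z, G.Adj a z → z ∈ A → z = u) :
    ∀ {x y : V}, ReflTransGen (AdjOn G A) x y → x ≠ a →
      (y ≠ a → ReflTransGen (AdjOn G (A \ {a})) x y) ∧
      (y = a → ReflTransGen (AdjOn G (A \ {a})) x u) := by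
  intro x y h
  induction h with
  | refl => exact fun hxa => ⟨fun _ => .refl, fun hya => absurd hya hxa⟩
  | @tail z y hxz hzy ih =>
      intro hxa
      by_cases hza : z = a
      · subst hza
        have hyu : y = u := hN y hzy.1 hzy.2.2
        subst hyu
        exact ⟨fun _ => (ih hxa).2 rfl, fun hya => absurd hya hua⟩
      · have h1 := (ih hxa).1 hza
        constructor
        · intro hya
          exact h1.tail ⟨hzy.1, ⟨hzy.2.1, hza⟩, ⟨hzy.2.2, hya⟩⟩
        · intro hya
          subst hya
          have : z = u := hN z hzy.1.symm hzy.2.1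
          exact this ▸ h1

/-- Adding a vertex adjacent to a member of a connected set keeps it connected. -/
lemma extend_conn {G : SimpleGraph V} {T : Set V} {a w : V}
    (hconn : ∀ x ∈ T, ∀ y ∈ T, ReflTransGen (AdjOn G T) x y)
    (hw : w ∈ T) (haw : G.Adj a w) :
    ∀ x ∈ T ∪ {a}, ∀ y ∈ T ∪ {a}, ReflTransGen (AdjOn G (T ∪ {a})) x y := by
  have mono : ∀ {x y}, ReflTransGen (AdjOn G T) x y → ReflTransGen (AdjOn G (T ∪ {a})) x y :=
    fun h => ReflTransGen.mono (fun p q hpq => ⟨hpq.1, Or.inl hpq.2.1, Or.inl hpq.2.2⟩) _ _ h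
  have tow : ∀ x ∈ T ∪ {a}, ReflTransGen (AdjOn G (T ∪ {a})) x w := by
    rintro x (hx | rfl)
    · exact mono (hconn x hx w hw)
    · exact ReflTransGen.single ⟨haw, Or.inr rfl, Or.inl hw⟩
  intro x hx y hy
  exact (tow x hx).trans ((Std.Symm.symm (self := @ReflTransGen.symmetric _ (AdjOn G (T ∪ {a})) ⟨adjOn_symm⟩) _ _ (tow y hy)))

/-- Lifting connectivity from `G` into a graph `G'` on a subtype containing `T`. -/
lemma lift_conn {G : SimpleGraph V} {S : Set V} (G' : SimpleGraph S)
    (hGadj : ∀ x y : S, G.Adj ↑x ↑y → G'.Adj x y)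
    {T : Set V} (hTS : T ⊆ S)
    (rtg : ∀ x ∈ T, ∀ y ∈ T, ReflTransGen (AdjOn G T) x y) (hne : T.Nonempty) :
    (G'.induce {x : S | ↑x ∈ T}).Connected := by
  rw [induce_connected_iff']
  obtain ⟨w, hw⟩ := hne
  refine ⟨⟨⟨w, hTS hw⟩, hw⟩, ?_⟩
  intro p hp q hq
  have key : ∀ (c : V), ReflTransGen (AdjOn G T) c ↑q → ∀ hc : c ∈ S, c ∈ T →
      ReflTransGen (AdjOn G' {x : S | ↑x ∈ T}) ⟨c, hc⟩ q := by
    intro c hchain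
    induction hchain using ReflTransGen.head_induction_on with
    | refl =>
        intro hc _
        have h : (⟨(q : V), hc⟩ : S) = q := Subtype.ext rfl
        rw [h]
    | @head c m hab _ ih =>
        intro hc hcT
        exact ReflTransGen.head ⟨hGadj ⟨c, hc⟩ ⟨m, hTS hab.2.2⟩ hab.1, hcT, hab.2.2⟩
          (ih (hTS hab.2.2) hab.2.2)
  exact key ↑p (rtg ↑p hp ↑q hq) p.2 hp

/-- Pushing connectivity down from a subtype graph to `G`. -/
lemma down_conn {G : SimpleGraph V} {S : Set V} {G' : SimpleGraph S} {T' : Set S}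
    (hT : ∀ x y : S, x ∈ T' → y ∈ T' → G'.Adj x y → G.Adj ↑x ↑y)
    (rtg : ∀ x ∈ T', ∀ y ∈ T', ReflTransGen (AdjOn G' T') x y) :
    ∀ p ∈ Subtype.val '' T', ∀ q ∈ Subtype.val '' T',
      ReflTransGen (AdjOn G (Subtype.val '' T')) p q := by
  rintro p ⟨x, hx, rfl⟩ q ⟨y, hy, rfl⟩
  exact ReflTransGen.lift (p := AdjOn G (Subtype.val '' T')) Subtype.val
    (fun a b hab => ⟨hT a b hab.2.1 hab.2.2 hab.1, ⟨a, hab.2.1, rfl⟩, ⟨b, hab.2.2, rfl⟩⟩)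
    _ _ (rtg x hx y hy)



open Relation

lemma RootedK4MinorOn.swap12 {G : SimpleGraph V} {a b c d : V} {A B C D : Set V}
    (h : RootedK4MinorOn G a b c d A B C D) : RootedK4MinorOn G b a c d B A C D := by
  obtain ⟨h1, h2, h3, h4, c1, c2, c3, c4, d1, d2, d3, d4, d5, d6, e1, e2, e3, e4, e5, e6⟩ := h
  refine ⟨h2, h1, h3, h4, c2, c1, c3, c4, d1.symm, d4, d5, d2, d3, d6, ?_, e4, e5, e2, e3, e6⟩
  obtain ⟨x, hx, y, hy, hxy⟩ := e1
  exact ⟨y, hy, x, hx, hxy.symm⟩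

lemma root_branch_mem {G : SimpleGraph V} {a u v : V} {A X Y Z : Set V}
    (hNa : G.neighborSet a = {u, v}) (haA : a ∈ A)
    (rtgA : ∀ x ∈ A, ∀ y ∈ A, ReflTransGen (AdjOn G A) x y)
    (dXY : Disjoint X Y) (dXZ : Disjoint X Z) (dYZ : Disjoint Y Z)
    (eX : ∃ x ∈ A, ∃ y ∈ X, G.Adj x y) (eY : ∃ x ∈ A, ∃ y ∈ Y, G.Adj x y)
    (eZ : ∃ x ∈ A, ∃ y ∈ Z, G.Adj x y) : u ∈ A ∨ v ∈ A := by
  by_contra hcon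
  push_neg at hcon
  obtain ⟨hu, hv⟩ := hcon
  have hadj : ∀ z, G.Adj a z → z ∉ A := by
    intro z hz hzA
    have hz' : z ∈ G.neighborSet a := hz
    rw [hNa] at hz'
    rcases hz' with rfl | rfl
    exacts [hu hzA, hv hzA]
  have hAa : ∀ x ∈ A, x = a := by
    intro x hx
    by_contra hxa
    rcases (rtgA a haA x hx).cases_head with heq | ⟨z, hstep, _⟩
    · exact hxa heq.symm
    · exact hadj z hstep.1 hstep.2.2
  obtain ⟨x1, hx1, y1, hy1, h1⟩ := eX
  obtain ⟨x2, hx2, y2, hy2, h2⟩ := eY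
  obtain ⟨x3, hx3, y3, hy3, h3⟩ := eZ
  rw [hAa x1 hx1] at h1
  rw [hAa x2 hx2] at h2
  rw [hAa x3 hx3] at h3
  have m1 : y1 ∈ G.neighborSet a := h1
  have m2 : y2 ∈ G.neighborSet a := h2
  have m3 : y3 ∈ G.neighborSet a := h3
  rw [hNa] at m1 m2 m3
  rcases m1 with rfl | rfl <;> rcases m2 with rfl | rfl <;> rcases m3 with rfl | rfl <;>
    first
    | exact Set.disjoint_left.mp dXY hy1 hy2
    | exact Set.disjoint_left.mp dXZ hy1 hy3
    | exact Set.disjoint_left.mp dYZ hy2 hy3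

lemma fwd_case {G : SimpleGraph V} {S : Set V} {a b c d u v : V} {A B C D : Set V}
    (G' : SimpleGraph S)
    (hGadj : ∀ x y : S, G.Adj ↑x ↑y → G'.Adj x y)
    (hu : u ∈ S) (hv : v ∈ S) (hc : c ∈ S) (hd : d ∈ S)
    (haS : a ∉ S) (hbS : b ∉ S) (hSab : ∀ x, x ≠ a → x ≠ b → x ∈ S)
    (huv' : G'.Adj ⟨u, hu⟩ ⟨v, hv⟩)
    (hNa : G.neighborSet a = {u, v}) (hNb : G.neighborSet b = {u, v})
    (hmin : RootedK4MinorOn G a b c d A B C D) (huA : u ∈ A) (hvB : v ∈ B) :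
    RootedK4MinorOn G' ⟨u, hu⟩ ⟨v, hv⟩ ⟨c, hc⟩ ⟨d, hd⟩
      {x : S | ↑x ∈ A \ {a}} {x : S | ↑x ∈ B \ {b}} {x : S | ↑x ∈ C} {x : S | ↑x ∈ D} := by
  obtain ⟨haA, hbB, hcC, hdD, cA, cB, cC, cD, dAB, dAC, dAD, dBC, dBD, dCD,
    eAB, eAC, eAD, eBC, eBD, eCD⟩ := hmin
  rw [induce_connected_iff'] at cA cB cC cD
  obtain ⟨-, rtgA⟩ := cA; obtain ⟨-, rtgB⟩ := cB
  obtain ⟨-, rtgC⟩ := cC; obtain ⟨-, rtgD⟩ := cD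
  have hbA : b ∉ A := fun h => Set.disjoint_left.mp dAB h hbB
  have haB : a ∉ B := fun h => Set.disjoint_left.mp dAB haA h
  have hvA : v ∉ A := fun h => Set.disjoint_left.mp dAB h hvB
  have huB : u ∉ B := fun h => Set.disjoint_left.mp dAB huA h
  have hua : u ≠ a := fun h => haS (h ▸ hu)
  have hvb : v ≠ b := fun h => hbS (h ▸ hv)
  have memNa : ∀ z, G.Adj a z → z = u ∨ z = v := by
    intro z hz
    have hz' : z ∈ G.neighborSet a := hz
    rw [hNa] at hz'
    simpa using hz'
  have memNb : ∀ z, G.Adj b z → z = u ∨ z = v := by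
    intro z hz
    have hz' : z ∈ G.neighborSet b := hz
    rw [hNb] at hz'
    simpa using hz'
  have hNA : ∀ z, G.Adj a z → z ∈ A → z = u := by
    intro z hz hzA
    rcases memNa z hz with rfl | rfl
    · rfl
    · exact absurd hzA hvA
  have hNB : ∀ z, G.Adj b z → z ∈ B → z = v := by
    intro z hz hzB
    rcases memNb z hz with rfl | rfl
    · exact absurd hzB huB
    · rfl
  have rtgA' : ∀ x ∈ A \ {a}, ∀ y ∈ A \ {a}, ReflTransGen (AdjOn G (A \ {a})) x y := by
    intro x hx y hy
    exact (shrink_aux huA hua hNA (rtgA x hx.1 y hy.1) hx.2).1 hy.2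
  have rtgB' : ∀ x ∈ B \ {b}, ∀ y ∈ B \ {b}, ReflTransGen (AdjOn G (B \ {b})) x y := by
    intro x hx y hy
    exact (shrink_aux hvB hvb hNB (rtgB x hx.1 y hy.1) hx.2).1 hy.2
  have hAS : A \ {a} ⊆ S := by
    intro x hx
    refine hSab x hx.2 (fun h => ?_)
    subst h; exact hbA hx.1
  have hBS : B \ {b} ⊆ S := by
    intro x hx
    refine hSab x (fun h => ?_) hx.2
    subst h; exact haB hx.1
  have hCS : C ⊆ S := by
    intro x hx
    refine hSab x (fun h => ?_) (fun h => ?_)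
    · subst h; exact Set.disjoint_left.mp dAC haA hx
    · subst h; exact Set.disjoint_left.mp dBC hbB hx
  have hDS : D ⊆ S := by
    intro x hx
    refine hSab x (fun h => ?_) (fun h => ?_)
    · subst h; exact Set.disjoint_left.mp dAD haA hx
    · subst h; exact Set.disjoint_left.mp dBD hbB hx
  have dj : ∀ {X Y : Set V}, Disjoint X Y →
      Disjoint {x : S | ↑x ∈ X} {x : S | ↑x ∈ Y} := by
    intro X Y h
    rw [Set.disjoint_left]
    intro p hp hq
    exact Set.disjoint_left.mp h hp hq
  have le : ∀ {X Y : Set V}, X ⊆ S → Y ⊆ S → (∃ x ∈ X, ∃ y ∈ Y, G.Adj x y) →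
      ∃ p ∈ {x : S | ↑x ∈ X}, ∃ q ∈ {x : S | ↑x ∈ Y}, G'.Adj p q := by
    rintro X Y hXS hYS ⟨x, hx, y, hy, h⟩
    exact ⟨⟨x, hXS hx⟩, hx, ⟨y, hYS hy⟩, hy, hGadj _ _ h⟩
  have eAC' : ∃ x ∈ A \ {a}, ∃ y ∈ C, G.Adj x y := by
    obtain ⟨x, hx, y, hy, h⟩ := eAC
    refine ⟨x, ⟨hx, fun hxa => ?_⟩, y, hy, h⟩
    have : x = a := hxa
    subst this
    rcases memNa y h with rfl | rfl
    · exact Set.disjoint_left.mp dAC huA hy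
    · exact Set.disjoint_left.mp dBC hvB hy
  have eAD' : ∃ x ∈ A \ {a}, ∃ y ∈ D, G.Adj x y := by
    obtain ⟨x, hx, y, hy, h⟩ := eAD
    refine ⟨x, ⟨hx, fun hxa => ?_⟩, y, hy, h⟩
    have : x = a := hxa
    subst this
    rcases memNa y h with rfl | rfl
    · exact Set.disjoint_left.mp dAD huA hy
    · exact Set.disjoint_left.mp dBD hvB hy
  have eBC' : ∃ x ∈ B \ {b}, ∃ y ∈ C, G.Adj x y := by
    obtain ⟨x, hx, y, hy, h⟩ := eBC
    refine ⟨x, ⟨hx, fun hxb => ?_⟩, y, hy, h⟩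
    have : x = b := hxb
    subst this
    rcases memNb y h with rfl | rfl
    · exact Set.disjoint_left.mp dAC huA hy
    · exact Set.disjoint_left.mp dBC hvB hy
  have eBD' : ∃ x ∈ B \ {b}, ∃ y ∈ D, G.Adj x y := by
    obtain ⟨x, hx, y, hy, h⟩ := eBD
    refine ⟨x, ⟨hx, fun hxb => ?_⟩, y, hy, h⟩
    have : x = b := hxb
    subst this
    rcases memNb y h with rfl | rfl
    · exact Set.disjoint_left.mp dAD huA hy
    · exact Set.disjoint_left.mp dBD hvB hy
  refine ⟨⟨huA, hua⟩, ⟨hvB, hvb⟩, hcC, hdD,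
    lift_conn G' hGadj hAS rtgA' ⟨u, huA, hua⟩,
    lift_conn G' hGadj hBS rtgB' ⟨v, hvB, hvb⟩,
    lift_conn G' hGadj hCS rtgC ⟨c, hcC⟩,
    lift_conn G' hGadj hDS rtgD ⟨d, hdD⟩,
    dj (dAB.mono Set.diff_subset Set.diff_subset),
    dj (dAC.mono_left Set.diff_subset),
    dj (dAD.mono_left Set.diff_subset),
    dj (dBC.mono_left Set.diff_subset),
    dj (dBD.mono_left Set.diff_subset),
    dj dCD,
    ⟨⟨u, hu⟩, ⟨huA, hua⟩, ⟨v, hv⟩, ⟨hvB, hvb⟩, huv'⟩,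
    le hAS hCS eAC', le hAS hDS eAD', le hBS hCS eBC', le hBS hDS eBD', le hCS hDS eCD⟩



end EarReductionAux

/-- if `a` and `b` both have neighbourhood exactly `{u,v}` with
`u,v ∉ {a,b,c,d}`, then deleting `a,b` and adding the edge `uv` preserves
existence of the rooted `K₄`-minor (with roots `u,v,c,d`). -/
theorem ear_reduction_rooted_K4_minor (G : SimpleGraph V) (a b c d u v : V)
    (hab : a ≠ b) (hac : a ≠ c) (had : a ≠ d) (hbc : b ≠ c) (hbd : b ≠ d) (hcd : c ≠ d)
    (huv : u ≠ v)
    (hua : u ≠ a) (hub : u ≠ b) (huc : u ≠ c) (hud : u ≠ d)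
    (hva : v ≠ a) (hvb : v ≠ b) (hvc : v ≠ c) (hvd : v ≠ d)
    (hNa : G.neighborSet a = {u, v}) (hNb : G.neighborSet b = {u, v}) :
    RootedK4Minor G a b c d ↔
      RootedK4Minor
        (G.induce {x : V | x ≠ a ∧ x ≠ b} ⊔
          fromEdgeSet {s((⟨u, hua, hub⟩ : {x : V // x ≠ a ∧ x ≠ b}), ⟨v, hva, hvb⟩)})
        ⟨u, hua, hub⟩ ⟨v, hva, hvb⟩ ⟨c, hac.symm, hbc.symm⟩ ⟨d, had.symm, hbd.symm⟩ := by
  set G' : SimpleGraph {x : V | x ≠ a ∧ x ≠ b} :=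
    G.induce {x : V | x ≠ a ∧ x ≠ b} ⊔
      fromEdgeSet {s((⟨u, hua, hub⟩ : {x : V // x ≠ a ∧ x ≠ b}), ⟨v, hva, hvb⟩)} with hG'def
  have hGadj : ∀ x y : {x : V | x ≠ a ∧ x ≠ b}, G.Adj ↑x ↑y → G'.Adj x y := by
    intro x y h
    rw [hG'def, sup_adj]
    exact Or.inl h
  have huv' : G'.Adj ⟨u, hua, hub⟩ ⟨v, hva, hvb⟩ := by
    rw [hG'def, sup_adj, fromEdgeSet_adj]
    exact Or.inr ⟨rfl, fun h => huv (congrArg Subtype.val h)⟩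
  have hG'case : ∀ x y : {x : V | x ≠ a ∧ x ≠ b}, G'.Adj x y →
      G.Adj ↑x ↑y ∨ (x = ⟨u, hua, hub⟩ ∧ y = ⟨v, hva, hvb⟩) ∨
        (x = ⟨v, hva, hvb⟩ ∧ y = ⟨u, hua, hub⟩) := by
    intro x y h
    rw [hG'def] at h
    simp only [sup_adj, comap_adj, Function.Embedding.coe_subtype, fromEdgeSet_adj,
      Set.mem_singleton_iff, Sym2.eq_iff] at h
    tauto
  constructor
  · rintro ⟨A, B, C, D, hmin⟩
    have hmin2 := hmin
    obtain ⟨haA, hbB, hcC, hdD, cA, cB, cC, cD, dAB, dAC, dAD, dBC, dBD, dCD,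
      eAB, eAC, eAD, eBC, eBD, eCD⟩ := hmin2
    rw [induce_connected_iff'] at cA cB
    obtain ⟨-, rtgA⟩ := cA; obtain ⟨-, rtgB⟩ := cB
    have flip : ∀ {X Y : Set V}, (∃ x ∈ X, ∃ y ∈ Y, G.Adj x y) →
        ∃ x ∈ Y, ∃ y ∈ X, G.Adj x y := by
      rintro X Y ⟨x, hx, y, hy, h⟩; exact ⟨y, hy, x, hx, h.symm⟩
    have hA := root_branch_mem hNa haA rtgA dBC dBD dCD eAB eAC eAD
    have hB := root_branch_mem hNb hbB rtgB dAC dAD dCD (flip eAB) eBC eBD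
    have haS : a ∉ ({x : V | x ≠ a ∧ x ≠ b} : Set V) := fun h => h.1 rfl
    have hbS : b ∉ ({x : V | x ≠ a ∧ x ≠ b} : Set V) := fun h => h.2 rfl
    rcases hA with huA | hvA <;> rcases hB with huB | hvB
    · exact (Set.disjoint_left.mp dAB huA huB).elim
    · exact ⟨_, _, _, _, fwd_case G' hGadj ⟨hua, hub⟩ ⟨hva, hvb⟩ ⟨hac.symm, hbc.symm⟩
        ⟨had.symm, hbd.symm⟩ haS hbS (fun x h1 h2 => ⟨h1, h2⟩) huv' hNa hNb hmin huA hvB⟩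
    · exact ⟨_, _, _, _, fwd_case G' hGadj ⟨hua, hub⟩ ⟨hva, hvb⟩ ⟨hac.symm, hbc.symm⟩
        ⟨had.symm, hbd.symm⟩ hbS haS (fun x h1 h2 => ⟨h2, h1⟩) huv' hNb hNa hmin.swap12 huB hvA⟩
    · exact (Set.disjoint_left.mp dAB hvA hvB).elim
  · rintro ⟨A', B', C', D', hmin'⟩
    obtain ⟨huA', hvB', hcC', hdD', cA, cB, cC, cD, dAB, dAC, dAD, dBC, dBD, dCD,
      eAB, eAC, eAD, eBC, eBD, eCD⟩ := hmin'
    rw [induce_connected_iff'] at cA cB cC cD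
    obtain ⟨-, rtgA⟩ := cA; obtain ⟨-, rtgB⟩ := cB
    obtain ⟨-, rtgC⟩ := cC; obtain ⟨-, rtgD⟩ := cD
    have hvA : (⟨v, hva, hvb⟩ : {x : V | x ≠ a ∧ x ≠ b}) ∉ A' :=
      fun h => Set.disjoint_left.mp dAB h hvB'
    have hvC : (⟨v, hva, hvb⟩ : {x : V | x ≠ a ∧ x ≠ b}) ∉ C' :=
      fun h => Set.disjoint_left.mp dBC hvB' h
    have hvD : (⟨v, hva, hvb⟩ : {x : V | x ≠ a ∧ x ≠ b}) ∉ D' :=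
      fun h => Set.disjoint_left.mp dBD hvB' h
    have huB : (⟨u, hua, hub⟩ : {x : V | x ≠ a ∧ x ≠ b}) ∉ B' :=
      fun h => Set.disjoint_left.mp dAB huA' h
    have huC : (⟨u, hua, hub⟩ : {x : V | x ≠ a ∧ x ≠ b}) ∉ C' :=
      fun h => Set.disjoint_left.mp dAC huA' h
    have huD : (⟨u, hua, hub⟩ : {x : V | x ≠ a ∧ x ≠ b}) ∉ D' :=
      fun h => Set.disjoint_left.mp dAD huA' h
    have keyA : ∀ x y, x ∈ A' → y ∈ A' → G'.Adj x y → G.Adj ↑x ↑y := by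
      intro x y hx hy h
      rcases hG'case x y h with h | ⟨rfl, rfl⟩ | ⟨rfl, rfl⟩
      · exact h
      · exact absurd hy hvA
      · exact absurd hx hvA
    have keyB : ∀ x y, x ∈ B' → y ∈ B' → G'.Adj x y → G.Adj ↑x ↑y := by
      intro x y hx hy h
      rcases hG'case x y h with h | ⟨rfl, rfl⟩ | ⟨rfl, rfl⟩
      · exact h
      · exact absurd hx huB
      · exact absurd hy huB
    have keyC : ∀ x y, x ∈ C' → y ∈ C' → G'.Adj x y → G.Adj ↑x ↑y := by
      intro x y hx hy h
      rcases hG'case x y h with h | ⟨rfl, rfl⟩ | ⟨rfl, rfl⟩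
      · exact h
      · exact absurd hy hvC
      · exact absurd hx hvC
    have keyD : ∀ x y, x ∈ D' → y ∈ D' → G'.Adj x y → G.Adj ↑x ↑y := by
      intro x y hx hy h
      rcases hG'case x y h with h | ⟨rfl, rfl⟩ | ⟨rfl, rfl⟩
      · exact h
      · exact absurd hy hvD
      · exact absurd hx hvD
    have rA := down_conn keyA rtgA
    have rB := down_conn keyB rtgB
    have rC := down_conn keyC rtgC
    have rD := down_conn keyD rtgD
    have hadjau : G.Adj a u := by
      have h : u ∈ G.neighborSet a := by rw [hNa]; exact Set.mem_insert _ _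
      exact h
    have hadjav : G.Adj a v := by
      have h : v ∈ G.neighborSet a := by rw [hNa]; exact Set.mem_insert_iff.mpr (Or.inr rfl)
      exact h
    have hadjbv : G.Adj b v := by
      have h : v ∈ G.neighborSet b := by rw [hNb]; exact Set.mem_insert_iff.mpr (Or.inr rfl)
      exact h
    have huim : u ∈ Subtype.val '' A' := ⟨⟨u, hua, hub⟩, huA', rfl⟩
    have hvim : v ∈ Subtype.val '' B' := ⟨⟨v, hva, hvb⟩, hvB', rfl⟩
    have aim : ∀ (X' : Set {x : V | x ≠ a ∧ x ≠ b}), a ∉ Subtype.val '' X' := by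
      rintro X' ⟨⟨x, hx⟩, -, h⟩; exact hx.1 h
    have bim : ∀ (X' : Set {x : V | x ≠ a ∧ x ≠ b}), b ∉ Subtype.val '' X' := by
      rintro X' ⟨⟨x, hx⟩, -, h⟩; exact hx.2 h
    have imdj : ∀ {X' Y' : Set {x : V | x ≠ a ∧ x ≠ b}}, Disjoint X' Y' →
        Disjoint (Subtype.val '' X') (Subtype.val '' Y') :=
      fun h => (Set.disjoint_image_iff Subtype.val_injective).mpr h
    have edown : ∀ {X' Y' : Set {x : V | x ≠ a ∧ x ≠ b}},
        (((⟨v, hva, hvb⟩ : {x : V | x ≠ a ∧ x ≠ b}) ∉ X' ∧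
            (⟨v, hva, hvb⟩ : {x : V | x ≠ a ∧ x ≠ b}) ∉ Y') ∨
          ((⟨u, hua, hub⟩ : {x : V | x ≠ a ∧ x ≠ b}) ∉ X' ∧
            (⟨u, hua, hub⟩ : {x : V | x ≠ a ∧ x ≠ b}) ∉ Y')) →
        (∃ x ∈ X', ∃ y ∈ Y', G'.Adj x y) →
        ∃ x ∈ Subtype.val '' X', ∃ y ∈ Subtype.val '' Y', G.Adj x y := by
      rintro X' Y' hcond ⟨x, hx, y, hy, h⟩
      rcases hG'case x y h with h | ⟨rfl, rfl⟩ | ⟨rfl, rfl⟩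
      · exact ⟨↑x, ⟨x, hx, rfl⟩, ↑y, ⟨y, hy, rfl⟩, h⟩
      · rcases hcond with ⟨-, h2⟩ | ⟨h1, -⟩
        · exact absurd hy h2
        · exact absurd hx h1
      · rcases hcond with ⟨h1, -⟩ | ⟨-, h2⟩
        · exact absurd hx h1
        · exact absurd hy h2
    have inl : ∀ {X Y : Set V} {w : V}, (∃ x ∈ X, ∃ y ∈ Y, G.Adj x y) →
        ∃ x ∈ X ∪ {w}, ∃ y ∈ Y, G.Adj x y := by
      rintro X Y w ⟨x, hx, y, hy, h⟩; exact ⟨x, Or.inl hx, y, hy, h⟩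
    refine ⟨Subtype.val '' A' ∪ {a}, Subtype.val '' B' ∪ {b},
      Subtype.val '' C', Subtype.val '' D',
      Or.inr rfl, Or.inr rfl,
      ⟨⟨c, hac.symm, hbc.symm⟩, hcC', rfl⟩, ⟨⟨d, had.symm, hbd.symm⟩, hdD', rfl⟩,
      ?_, ?_, ?_, ?_, ?_, ?_, ?_, ?_, ?_, ?_,
      ⟨a, Or.inr rfl, v, Or.inl hvim, hadjav⟩,
      inl (edown (Or.inl ⟨hvA, hvC⟩) eAC),
      inl (edown (Or.inl ⟨hvA, hvD⟩) eAD),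
      inl (edown (Or.inr ⟨huB, huC⟩) eBC),
      inl (edown (Or.inr ⟨huB, huD⟩) eBD),
      edown (Or.inl ⟨hvC, hvD⟩) eCD⟩
    · rw [induce_connected_iff']
      exact ⟨⟨a, Or.inr rfl⟩, extend_conn rA huim hadjau⟩
    · rw [induce_connected_iff']
      exact ⟨⟨b, Or.inr rfl⟩, extend_conn rB hvim hadjbv⟩
    · rw [induce_connected_iff']
      exact ⟨⟨c, ⟨⟨c, hac.symm, hbc.symm⟩, hcC', rfl⟩⟩, rC⟩
    · rw [induce_connected_iff']
      exact ⟨⟨d, ⟨⟨d, had.symm, hbd.symm⟩, hdD', rfl⟩⟩, rD⟩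
    · refine Set.disjoint_union_left.mpr
        ⟨Set.disjoint_union_right.mpr ⟨imdj dAB, ?_⟩,
          Set.disjoint_union_right.mpr ⟨Set.disjoint_singleton_left.mpr (aim B'), ?_⟩⟩
      · exact Set.disjoint_singleton_right.mpr (bim A')
      · exact Set.disjoint_singleton_left.mpr hab
    · exact Set.disjoint_union_left.mpr
        ⟨imdj dAC, Set.disjoint_singleton_left.mpr (aim C')⟩
    · exact Set.disjoint_union_left.mpr
        ⟨imdj dAD, Set.disjoint_singleton_left.mpr (aim D')⟩
    · exact Set.disjoint_union_left.mpr
        ⟨imdj dBC, Set.disjoint_singleton_left.mpr (bim C')⟩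
    · exact Set.disjoint_union_left.mpr
        ⟨imdj dBD, Set.disjoint_singleton_left.mpr (bim D')⟩
    · exact imdj dCD
end
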